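/- arXiv:2211.16071 — 3 statements merged into one kernel-verified Lean document; each statement's English description precedes it below -/
import Mathlib

section
/- Let ℋ be a real separable Hilbert space and λ, T > 0. Let (τ_i)_{i≥1} be a strictly increasing sequence of positive random variables with N(t) = #{i ≥ 1 : τ_i ≤ t} finite almost surely for every t, and suppose N(T) has the Poisson distribution with parameter λT. Let ((X_i, X_iⁿ))_{i≥1} be an i.i.d. sequence of ℋ×ℋ-valued random variables, independent of N(T), with E[‖X₁‖²] < ∞ and E[‖X₁ⁿ‖²] < ∞. Define the compound Poisson processes L(t) = ∑_{i : τ_i ≤ t} X_i and Lⁿ(t) = ∑_{i : τ_i ≤ t} X_iⁿ. Then E[ sup_{0 ≤ t ≤ T} ‖L(t) − Lⁿ(t)‖² ] ≤ 2λT(1 + λT) E[‖X₁ − X₁ⁿ‖²]. -/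
open MeasureTheory ProbabilityTheory
open scoped ENNReal NNReal

lemma poisson_series_aux (y : ℝ) :
    Summable (fun k : ℕ => (k : ℝ) ^ 2 * (Real.exp (-y) * y ^ k / (k.factorial : ℝ))) ∧
    ∑' k : ℕ, (k : ℝ) ^ 2 * (Real.exp (-y) * y ^ k / (k.factorial : ℝ)) = y + y ^ 2 := by
  have hexp : ∑' n : ℕ, y ^ n / (n.factorial : ℝ) = Real.exp y := by
    rw [Real.exp_eq_exp_ℝ, NormedSpace.exp_eq_tsum_div]
  set f1 : ℕ → ℝ := fun k => (k : ℝ) * y ^ k / (k.factorial : ℝ) with hf1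
  set f2 : ℕ → ℝ := fun k => (k : ℝ) * ((k : ℝ) - 1) * y ^ k / (k.factorial : ℝ) with hf2
  have e1 : ∀ j : ℕ, f1 (j + 1) = y * (y ^ j / (j.factorial : ℝ)) := by
    intro j
    have hj : (j.factorial : ℝ) ≠ 0 := Nat.cast_ne_zero.2 j.factorial_ne_zero
    simp only [hf1, Nat.factorial_succ]
    push_cast
    field_simp
    ring
  have e2 : ∀ j : ℕ, f2 (j + 2) = y ^ 2 * (y ^ j / (j.factorial : ℝ)) := by
    intro j
    have hj : (j.factorial : ℝ) ≠ 0 := Nat.cast_ne_zero.2 j.factorial_ne_zero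
    simp only [hf2, Nat.factorial_succ]
    push_cast
    field_simp
    ring
  have hs1 : Summable f1 := by
    rw [← summable_nat_add_iff 1]
    exact ((Real.summable_pow_div_factorial y).mul_left y).congr (fun j => (e1 j).symm)
  have hs2 : Summable f2 := by
    rw [← summable_nat_add_iff 2]
    exact ((Real.summable_pow_div_factorial y).mul_left (y ^ 2)).congr (fun j => (e2 j).symm)
  have ht1 : ∑' k, f1 k = y * Real.exp y := by
    rw [Summable.tsum_eq_zero_add hs1]
    have h0 : f1 0 = 0 := by simp [hf1]
    rw [h0, zero_add, tsum_congr e1, tsum_mul_left, hexp]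
  have ht2 : ∑' k, f2 k = y ^ 2 * Real.exp y := by
    rw [Summable.tsum_eq_zero_add hs2]
    rw [Summable.tsum_eq_zero_add ((summable_nat_add_iff 1).2 hs2)]
    have h0 : f2 0 = 0 := by simp [hf2]
    have h1 : f2 (0 + 1) = 0 := by simp [hf2]
    rw [h0, h1, zero_add, zero_add]
    rw [tsum_congr (fun j => show f2 (j + 1 + 1) = y ^ 2 * (y ^ j / (j.factorial : ℝ)) from e2 j),
      tsum_mul_left, hexp]
  have hkey : ∀ k : ℕ, (k : ℝ) ^ 2 * (Real.exp (-y) * y ^ k / (k.factorial : ℝ))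
      = Real.exp (-y) * (f1 k + f2 k) := by
    intro k; simp only [hf1, hf2]; ring
  have hexp1 : Real.exp (-y) * Real.exp y = 1 := by rw [← Real.exp_add]; simp
  constructor
  · exact ((hs1.add hs2).mul_left (Real.exp (-y))).congr (fun k => (hkey k).symm)
  · rw [tsum_congr hkey, tsum_mul_left, Summable.tsum_add hs1 hs2, ht1, ht2]
    calc Real.exp (-y) * (y * Real.exp y + y ^ 2 * Real.exp y)
        = (y + y ^ 2) * (Real.exp (-y) * Real.exp y) := by ring
      _ = y + y ^ 2 := by rw [hexp1, mul_one]

/-- For compound Poisson processes `L(t) = ∑_{τ_i ≤ t} X_i` and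
`Lⁿ(t) = ∑_{τ_i ≤ t} X_iⁿ` with common jump times (`N(T)` Poisson with parameter `λT`,
i.i.d. square-integrable pairs of jumps independent of `N(T)`),
`E[sup_{0≤t≤T} ‖L(t) − Lⁿ(t)‖²] ≤ 2λT(1+λT) E[‖X₁ − X₁ⁿ‖²]`. -/
theorem stmt5 {E : Type*} [NormedAddCommGroup E] [InnerProductSpace ℝ E] [CompleteSpace E]
    [SecondCountableTopology E] [MeasurableSpace E] [BorelSpace E]
    {Ω : Type*} [MeasurableSpace Ω] (μ : Measure Ω) [IsProbabilityMeasure μ]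
    (lam T : ℝ) (hlam : 0 < lam) (hT : 0 < T)
    (τ : ℕ → Ω → ℝ) (hτpos : ∀ i ω, 0 < τ i ω)
    (hτmono : ∀ ω, StrictMono fun i => τ i ω) (hτmeas : ∀ i, Measurable (τ i))
    (hfin : ∀ t : ℝ, ∀ᵐ ω ∂μ, {i : ℕ | τ i ω ≤ t}.Finite)
    (Nf : ℝ → Ω → ℕ) (hNf : ∀ t ω, Nf t ω = Set.ncard {i : ℕ | τ i ω ≤ t})
    (hpois : ∀ k : ℕ, μ {ω | Nf T ω = k}
        = ENNReal.ofReal (Real.exp (-(lam * T)) * (lam * T) ^ k / k.factorial))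
    (X Xn : ℕ → Ω → E)
    (hXmeas : ∀ i, Measurable (X i)) (hXnmeas : ∀ i, Measurable (Xn i))
    (hident : ∀ i, IdentDistrib (fun ω => (X i ω, Xn i ω)) (fun ω => (X 0 ω, Xn 0 ω)) μ μ)
    (hindep : iIndepFun (fun i ω => (X i ω, Xn i ω)) μ)
    (hNindep : Indep (MeasurableSpace.comap (Nf T) inferInstance)
      (⨆ i, MeasurableSpace.comap (fun ω => (X i ω, Xn i ω)) inferInstance) μ)
    (hX2 : Integrable (fun ω => ‖X 0 ω‖ ^ 2) μ)
    (hXn2 : Integrable (fun ω => ‖Xn 0 ω‖ ^ 2) μ)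
    (L Ln : ℝ → Ω → E)
    (hL : ∀ t ω, L t ω = ∑ i ∈ Finset.range (Nf t ω), X i ω)
    (hLn : ∀ t ω, Ln t ω = ∑ i ∈ Finset.range (Nf t ω), Xn i ω) :
    (∫ ω, (⨆ t : Set.Icc (0:ℝ) T, ‖L t.1 ω - Ln t.1 ω‖ ^ 2) ∂μ)
      ≤ 2 * lam * T * (1 + lam * T) * ∫ ω, ‖X 0 ω - Xn 0 ω‖ ^ 2 ∂μ := by
  classical
  have hτmono' : ∀ ω, Monotone fun i => τ i ω := fun ω => (hτmono ω).monotone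
  set y : ℝ := lam * T with hy
  have hy0 : 0 < y := mul_pos hlam hT
  -- values of Nf T
  have hval1 : ∀ ω m, τ m ω ≤ T → T < τ (m + 1) ω → Nf T ω = m + 1 := by
    intro ω m h1 h2
    have hset : {i : ℕ | τ i ω ≤ T} = Set.Iio (m + 1) := by
      ext i
      simp only [Set.mem_setOf_eq, Set.mem_Iio]
      constructor
      · intro hi
        by_contra hlt
        push_neg at hlt
        exact absurd (le_trans (hτmono' ω hlt) hi) (not_le.2 h2)
      · intro hi
        exact le_trans (hτmono' ω (Nat.lt_succ_iff.mp hi)) h1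
    rw [hNf, hset, ← Finset.coe_range, Set.ncard_coe_finset, Finset.card_range]
  have hval0a : ∀ ω, T < τ 0 ω → Nf T ω = 0 := by
    intro ω h
    have hset : {i : ℕ | τ i ω ≤ T} = ∅ := by
      ext i
      simp only [Set.mem_setOf_eq, Set.mem_empty_iff_false, iff_false]
      intro hi
      exact absurd (le_trans (hτmono' ω (Nat.zero_le i)) hi) (not_le.2 h)
    rw [hNf, hset, Set.ncard_empty]
  have hval0b : ∀ ω, (∀ i, τ i ω ≤ T) → Nf T ω = 0 := by
    intro ω h
    have hset : {i : ℕ | τ i ω ≤ T} = Set.univ := by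
      ext i; simp [h i]
    rw [hNf, hset]
    exact Set.Infinite.ncard Set.infinite_univ
  have htri : ∀ ω, T < τ 0 ω ∨ (∀ i, τ i ω ≤ T) ∨ ∃ m, τ m ω ≤ T ∧ T < τ (m + 1) ω := by
    intro ω
    by_cases hall : ∀ i, τ i ω ≤ T
    · exact Or.inr (Or.inl hall)
    push_neg at hall
    by_cases h0 : T < τ 0 ω
    · exact Or.inl h0
    push_neg at h0
    obtain ⟨i, hi⟩ := hall
    have hex : ∃ i, T < τ i ω := ⟨i, hi⟩
    have hn : T < τ (Nat.find hex) ω := Nat.find_spec hex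
    have hn0 : Nat.find hex ≠ 0 := by
      intro h
      rw [h] at hn
      exact absurd hn (not_lt.2 h0)
    obtain ⟨m, hm⟩ := Nat.exists_eq_succ_of_ne_zero hn0
    refine Or.inr (Or.inr ⟨m, ?_, by rw [← Nat.succ_eq_add_one, ← hm]; exact hn⟩)
    have := Nat.find_min hex (show m < Nat.find hex by omega)
    exact not_lt.1 this
  have hNmeas : Measurable (Nf T) := by
    apply measurable_to_countable'
    intro k
    match k with
    | 0 =>
      have hpre : Nf T ⁻¹' {0} = {ω | T < τ 0 ω} ∪ ⋂ i, {ω | τ i ω ≤ T} := by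
        ext ω
        simp only [Set.mem_preimage, Set.mem_singleton_iff, Set.mem_union, Set.mem_iInter,
          Set.mem_setOf_eq]
        constructor
        · intro h
          rcases htri ω with h1 | h2 | ⟨m, hm1, hm2⟩
          · exact Or.inl h1
          · exact Or.inr h2
          · rw [hval1 ω m hm1 hm2] at h; omega
        · rintro (h | h)
          · exact hval0a ω h
          · exact hval0b ω h
      rw [hpre]
      exact (measurableSet_lt measurable_const (hτmeas 0)).union
        (MeasurableSet.iInter fun i => measurableSet_le (hτmeas i) measurable_const)
    | (m + 1) =>
      have hpre : Nf T ⁻¹' {m + 1} = {ω | τ m ω ≤ T} ∩ {ω | T < τ (m + 1) ω} := by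
        ext ω
        simp only [Set.mem_preimage, Set.mem_singleton_iff, Set.mem_inter_iff, Set.mem_setOf_eq]
        constructor
        · intro h
          rcases htri ω with h1 | h2 | ⟨m', hm1, hm2⟩
          · rw [hval0a ω h1] at h; omega
          · rw [hval0b ω h2] at h; omega
          · rw [hval1 ω m' hm1 hm2] at h
            obtain rfl : m' = m := by omega
            exact ⟨hm1, hm2⟩
        · rintro ⟨h1, h2⟩
          exact hval1 ω m h1 h2
      rw [hpre]
      exact (measurableSet_le (hτmeas m) measurable_const).inter
        (measurableSet_lt measurable_const (hτmeas (m + 1)))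
  -- the jump differences
  have hYmeas : ∀ i, Measurable fun ω => X i ω - Xn i ω := fun i => (hXmeas i).sub (hXnmeas i)
  -- monotonicity of Nf
  have hmono_ae : ∀ᵐ ω ∂μ, ∀ t : Set.Icc (0:ℝ) T, Nf t.1 ω ≤ Nf T ω := by
    filter_upwards [hfin T] with ω hωfin
    intro t
    rw [hNf, hNf]
    exact Set.ncard_le_ncard (fun i hi => le_trans hi t.2.2) hωfin
  -- the dominating function
  set g : Ω → ℝ := fun ω =>
    (Nf T ω : ℝ) * ∑ i ∈ Finset.range (Nf T ω), ‖X i ω - Xn i ω‖ ^ 2 with hg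
  have hgnonneg : ∀ ω, 0 ≤ g ω := by
    intro ω
    apply mul_nonneg (Nat.cast_nonneg _)
    exact Finset.sum_nonneg fun i _ => sq_nonneg _
  haveI hne : Nonempty (Set.Icc (0:ℝ) T) := ⟨⟨0, le_refl 0, hT.le⟩⟩
  have hsup_le : ∀ᵐ ω ∂μ,
      (⨆ t : Set.Icc (0:ℝ) T, ‖L t.1 ω - Ln t.1 ω‖ ^ 2) ≤ g ω := by
    filter_upwards [hmono_ae] with ω hω
    apply ciSup_le
    intro t
    rw [hL, hLn, ← Finset.sum_sub_distrib]
    calc ‖∑ i ∈ Finset.range (Nf t.1 ω), (X i ω - Xn i ω)‖ ^ 2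
        ≤ (∑ i ∈ Finset.range (Nf t.1 ω), ‖X i ω - Xn i ω‖) ^ 2 := by
          apply pow_le_pow_left₀ (norm_nonneg _) (norm_sum_le _ _)
      _ ≤ (∑ i ∈ Finset.range (Nf T ω), ‖X i ω - Xn i ω‖) ^ 2 := by
          apply pow_le_pow_left₀ (Finset.sum_nonneg fun i _ => norm_nonneg _)
          exact Finset.sum_le_sum_of_subset_of_nonneg
            (Finset.range_subset_range.2 (hω t)) (fun i _ _ => norm_nonneg _)
      _ ≤ (Finset.range (Nf T ω)).card *
            ∑ i ∈ Finset.range (Nf T ω), ‖X i ω - Xn i ω‖ ^ 2 := sq_sum_le_card_mul_sum_sq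
      _ = g ω := by rw [Finset.card_range]
  have hsup_nonneg : ∀ᵐ ω ∂μ,
      0 ≤ (⨆ t : Set.Icc (0:ℝ) T, ‖L t.1 ω - Ln t.1 ω‖ ^ 2) := by
    filter_upwards with ω
    exact Real.iSup_nonneg fun t => sq_nonneg _
  -- lintegral of squared jump differences
  set c : ℝ≥0∞ := ∫⁻ ω, (‖X 0 ω - Xn 0 ω‖₊ : ℝ≥0∞) ^ 2 ∂μ with hc
  have hφmeas : Measurable fun p : E × E => ((‖p.1 - p.2‖₊ : ℝ≥0∞)) ^ 2 :=
    ((measurable_fst.sub measurable_snd).enorm).pow_const 2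
  have hYident : ∀ i, (∫⁻ ω, (‖X i ω - Xn i ω‖₊ : ℝ≥0∞) ^ 2 ∂μ) = c := by
    intro i
    exact ((hident i).comp hφmeas).lintegral_eq
  -- Y 0 square integrable
  have hY0int : Integrable (fun ω => ‖X 0 ω - Xn 0 ω‖ ^ 2) μ := by
    have hb : Integrable (fun ω => 2 * ‖X 0 ω‖ ^ 2 + 2 * ‖Xn 0 ω‖ ^ 2) μ :=
      (hX2.const_mul 2).add (hXn2.const_mul 2)
    apply hb.mono' (((hYmeas 0).norm.pow_const 2).aestronglyMeasurable)
    filter_upwards with ω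
    rw [Real.norm_of_nonneg (sq_nonneg _)]
    have h1 : ‖X 0 ω - Xn 0 ω‖ ≤ ‖X 0 ω‖ + ‖Xn 0 ω‖ := norm_sub_le _ _
    calc ‖X 0 ω - Xn 0 ω‖ ^ 2 ≤ (‖X 0 ω‖ + ‖Xn 0 ω‖) ^ 2 :=
          pow_le_pow_left₀ (norm_nonneg _) h1 2
      _ ≤ 2 * ‖X 0 ω‖ ^ 2 + 2 * ‖Xn 0 ω‖ ^ 2 := by
          nlinarith [sq_nonneg (‖X 0 ω‖ - ‖Xn 0 ω‖)]
  have hcfin : c < ⊤ := by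
    have := hY0int.2
    rw [HasFiniteIntegral] at this
    convert this using 1
    apply lintegral_congr
    intro ω
    rw [← enorm_eq_nnnorm, ← ofReal_norm, ← ofReal_norm,
      Real.norm_of_nonneg (sq_nonneg _), ← ENNReal.ofReal_pow (norm_nonneg _)]
  have hintY : ∫ ω, ‖X 0 ω - Xn 0 ω‖ ^ 2 ∂μ = c.toReal := by
    rw [integral_eq_lintegral_of_nonneg_ae (Filter.Eventually.of_forall fun ω => sq_nonneg _)
      hY0int.aestronglyMeasurable]
    congr 1
    apply lintegral_congr
    intro ω
    rw [← enorm_eq_nnnorm, ← ofReal_norm, ← ENNReal.ofReal_pow (norm_nonneg _)]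
  -- summand functions
  set F : ℕ → Ω → ℝ≥0∞ := fun k ω =>
    (k : ℝ≥0∞) * ∑ i ∈ Finset.range k, (‖X i ω - Xn i ω‖₊ : ℝ≥0∞) ^ 2 with hF
  have hFmeas : ∀ k, Measurable (F k) := by
    intro k
    exact measurable_const.mul
      (Finset.measurable_sum _ fun i _ => ((hYmeas i).enorm.pow_const 2))
  have hFint : ∀ k : ℕ, (∫⁻ ω, F k ω ∂μ) = (k : ℝ≥0∞) * ((k : ℝ≥0∞) * c) := by
    intro k
    rw [hF]
    rw [lintegral_const_mul _ (Finset.measurable_sum _ fun i _ => (show Measurable fun ω => (‖X i ω - Xn i ω‖₊ : ℝ≥0∞) ^ 2 from (hYmeas i).enorm.pow_const 2))]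
    congr 1
    rw [lintegral_finset_sum _ fun i _ => (show Measurable fun ω => (‖X i ω - Xn i ω‖₊ : ℝ≥0∞) ^ 2 from (hYmeas i).enorm.pow_const 2)]
    rw [Finset.sum_congr rfl fun i _ => hYident i, Finset.sum_const, Finset.card_range,
      nsmul_eq_mul]
  -- independence step
  have hkey : ∀ k : ℕ, (∫⁻ ω, Set.indicator (Nf T ⁻¹' {k}) (fun _ => (1:ℝ≥0∞)) ω * F k ω ∂μ)
      = μ (Nf T ⁻¹' {k}) * ((k : ℝ≥0∞) * ((k : ℝ≥0∞) * c)) := by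
    intro k
    have hMf : MeasurableSpace.comap (Nf T) inferInstance ≤ (inferInstance : MeasurableSpace Ω) :=
      measurable_iff_comap_le.1 hNmeas
    have hMg : (⨆ i, MeasurableSpace.comap (fun ω => (X i ω, Xn i ω)) inferInstance)
        ≤ (inferInstance : MeasurableSpace Ω) := by
      apply iSup_le
      intro i
      exact measurable_iff_comap_le.1 ((hXmeas i).prodMk (hXnmeas i))
    have hu : Measurable[MeasurableSpace.comap (Nf T) inferInstance]
        (Set.indicator (Nf T ⁻¹' {k}) (fun _ => (1:ℝ≥0∞))) := by
      apply Measurable.indicator measurable_const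
      exact MeasurableSpace.measurableSet_comap.2 ⟨{k}, measurableSet_singleton k, rfl⟩
    have hfk : Measurable[⨆ i, MeasurableSpace.comap (fun ω => (X i ω, Xn i ω)) inferInstance]
        (F k) := by
      apply Measurable.mul (@measurable_const _ _ _ _ _)
      apply Finset.measurable_sum
      intro i _
      have h1 : Measurable[MeasurableSpace.comap (fun ω => (X i ω, Xn i ω)) inferInstance]
          fun ω => (‖X i ω - Xn i ω‖₊ : ℝ≥0∞) ^ 2 :=
        hφmeas.comp (Measurable.of_comap_le le_rfl)
      exact h1.mono (le_iSup (fun j => MeasurableSpace.comap (fun ω => (X j ω, Xn j ω)) inferInstance) i) le_rfl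
    rw [lintegral_mul_eq_lintegral_mul_lintegral_of_independent_measurableSpace hMf hMg
      hNindep hu hfk]
    rw [hFint k]
    congr 1
    exact lintegral_indicator_const (hNmeas (measurableSet_singleton k)) 1 |>.trans (by
      rw [one_mul])
  -- decomposition of g
  have hdecomp : ∀ ω, ENNReal.ofReal (g ω)
      = ∑' k : ℕ, Set.indicator (Nf T ⁻¹' {k}) (fun _ => (1:ℝ≥0∞)) ω * F k ω := by
    intro ω
    rw [tsum_eq_single (Nf T ω) ?_]
    · rw [Set.indicator_of_mem (show ω ∈ Nf T ⁻¹' {Nf T ω} from rfl), one_mul, hg, hF]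
      rw [ENNReal.ofReal_mul (Nat.cast_nonneg _), ENNReal.ofReal_natCast,
        ENNReal.ofReal_sum_of_nonneg fun i _ => sq_nonneg _]
      congr 1
      apply Finset.sum_congr rfl
      intro i _
      rw [← enorm_eq_nnnorm, ← ofReal_norm, ← ENNReal.ofReal_pow (norm_nonneg _)]
    · intro k hk
      rw [Set.indicator_of_notMem (show ω ∉ Nf T ⁻¹' {k} by
        simp only [Set.mem_preimage, Set.mem_singleton_iff]
        exact fun h => hk h.symm), zero_mul]
  -- indicator measurability (ambient)
  have humeas : ∀ k : ℕ, Measurable (Set.indicator (Nf T ⁻¹' {k}) (fun _ => (1:ℝ≥0∞))) :=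
    fun k => measurable_const.indicator (hNmeas (measurableSet_singleton k))
  -- the lintegral of g
  have hlint : (∫⁻ ω, ENNReal.ofReal (g ω) ∂μ)
      = (∑' k : ℕ, (k : ℝ≥0∞) ^ 2 * μ (Nf T ⁻¹' {k})) * c := by
    calc (∫⁻ ω, ENNReal.ofReal (g ω) ∂μ)
        = ∫⁻ ω, ∑' k : ℕ, Set.indicator (Nf T ⁻¹' {k}) (fun _ => (1:ℝ≥0∞)) ω * F k ω ∂μ :=
          lintegral_congr hdecomp
      _ = ∑' k : ℕ, ∫⁻ ω, Set.indicator (Nf T ⁻¹' {k}) (fun _ => (1:ℝ≥0∞)) ω * F k ω ∂μ :=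
          lintegral_tsum fun k => ((humeas k).mul (hFmeas k)).aemeasurable
      _ = ∑' k : ℕ, μ (Nf T ⁻¹' {k}) * ((k : ℝ≥0∞) * ((k : ℝ≥0∞) * c)) := tsum_congr hkey
      _ = ∑' k : ℕ, ((k : ℝ≥0∞) ^ 2 * μ (Nf T ⁻¹' {k})) * c := by
          apply tsum_congr
          intro k
          ring
      _ = (∑' k : ℕ, (k : ℝ≥0∞) ^ 2 * μ (Nf T ⁻¹' {k})) * c := ENNReal.tsum_mul_right
  -- the Poisson second moment
  have hμk : ∀ k : ℕ, μ (Nf T ⁻¹' {k})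
      = ENNReal.ofReal (Real.exp (-y) * y ^ k / (k.factorial : ℝ)) := by
    intro k
    have hsetk : Nf T ⁻¹' {k} = {ω | Nf T ω = k} := by
      ext ω; simp
    rw [hsetk, hpois k]
  obtain ⟨hsumm, hval⟩ := poisson_series_aux y
  have hsum : (∑' k : ℕ, (k : ℝ≥0∞) ^ 2 * μ (Nf T ⁻¹' {k})) = ENNReal.ofReal (y + y ^ 2) := by
    calc (∑' k : ℕ, (k : ℝ≥0∞) ^ 2 * μ (Nf T ⁻¹' {k}))
        = ∑' k : ℕ, ENNReal.ofReal ((k : ℝ) ^ 2 * (Real.exp (-y) * y ^ k / (k.factorial : ℝ))) := by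
          apply tsum_congr
          intro k
          rw [hμk k, ← ENNReal.ofReal_natCast k, ← ENNReal.ofReal_pow (by positivity),
            ← ENNReal.ofReal_mul (by positivity)]
      _ = ENNReal.ofReal (∑' k : ℕ, (k : ℝ) ^ 2 * (Real.exp (-y) * y ^ k / (k.factorial : ℝ))) :=
          (ENNReal.ofReal_tsum_of_nonneg (fun k => by positivity) hsumm).symm
      _ = ENNReal.ofReal (y + y ^ 2) := by rw [hval]
  -- integrability of g
  have hgmeas : Measurable g := by
    have h1 : Measurable fun p : Ω × ℕ => (p.2 : ℝ) * ∑ i ∈ Finset.range p.2, ‖X i p.1 - Xn i p.1‖ ^ 2 := by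
      apply measurable_from_prod_countable_left
      intro k
      dsimp only
      exact measurable_const.mul
        (Finset.measurable_sum _ fun i _ => ((hYmeas i).norm.pow_const 2))
    exact h1.comp (measurable_id.prodMk hNmeas)
  have hofg : ∀ ω, ‖g ω‖ₑ = ENNReal.ofReal (g ω) := by
    intro ω
    rw [← ofReal_norm, Real.norm_of_nonneg (hgnonneg ω)]
  have hgint : Integrable g μ := by
    refine ⟨hgmeas.aestronglyMeasurable, ?_⟩
    rw [HasFiniteIntegral, lintegral_congr hofg, hlint, hsum]
    exact ENNReal.mul_lt_top ENNReal.ofReal_lt_top hcfin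
  have hgval : ∫ ω, g ω ∂μ = (y + y ^ 2) * c.toReal := by
    rw [integral_eq_lintegral_of_nonneg_ae (Filter.Eventually.of_forall hgnonneg)
      hgmeas.aestronglyMeasurable, hlint, hsum, ENNReal.toReal_mul,
      ENNReal.toReal_ofReal (by positivity)]
  calc (∫ ω, (⨆ t : Set.Icc (0:ℝ) T, ‖L t.1 ω - Ln t.1 ω‖ ^ 2) ∂μ)
      ≤ ∫ ω, g ω ∂μ := integral_mono_of_nonneg hsup_nonneg hgint hsup_le
    _ = (y + y ^ 2) * c.toReal := hgval
    _ ≤ 2 * lam * T * (1 + lam * T) * ∫ ω, ‖X 0 ω - Xn 0 ω‖ ^ 2 ∂μ := by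
        rw [hintY]
        apply mul_le_mul_of_nonneg_right _ ENNReal.toReal_nonneg
        rw [hy]
        nlinarith [mul_pos hlam hT]
end

section
/- Let ℋ be a real separable Hilbert space, let 𝔠 and 𝔠ⁿ be bounded linear operators on ℋ, and let λ, T > 0. Let (τ_i)_{i≥1} be a strictly increasing sequence of positive random variables with N(t) = #{i ≥ 1 : τ_i ≤ t} finite almost surely for every t, and suppose N(T) has the Poisson distribution with parameter λT. Let (X_i)_{i≥1} be an i.i.d. sequence of ℋ-valued random variables, independent of N(T), with E[‖X₁‖²] < ∞, and let V₀ be an ℋ-valued random variable with E[‖V₀‖²] < ∞. Define V(t) = exp(t𝔠)V₀ + ∑_{i : τ_i ≤ t} exp((t − τ_i)𝔠) X_i and Vⁿ(t) = exp(t𝔠ⁿ)V₀ + ∑_{i : τ_i ≤ t} exp((t − τ_i)𝔠ⁿ) X_i. Then E[ sup_{0 ≤ t ≤ T} ‖V(t) − Vⁿ(t)‖² ] ≤ C(T) ‖𝔠 − 𝔠ⁿ‖_op², where C(T) = 2T² e^{2T·max(‖𝔠‖_op, ‖𝔠ⁿ‖_op)} ( E[‖V₀‖²] + λT E[‖X₁‖²]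 + λ²T² (E[‖X₁‖])² ). -/
open MeasureTheory ProbabilityTheory
open scoped Nat

lemma pow_diff_bd {A : Type*} [NormedRing A] (a b : A) (n : ℕ) :
    ‖a ^ (n+1) - b ^ (n+1)‖ ≤ (n+1) * max ‖a‖ ‖b‖ ^ n * ‖a - b‖ := by
  induction n with
  | zero => simp
  | succ n ih =>
    have key : a ^ (n+2) - b ^ (n+2) = a * (a ^ (n+1) - b ^ (n+1)) + (a - b) * b ^ (n+1) := by
      rw [pow_succ' a (n+1), pow_succ' b (n+1), mul_sub, sub_mul]; abel
    set M := max ‖a‖ ‖b‖ with hM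
    have hM0 : 0 ≤ M := le_max_of_le_left (norm_nonneg a)
    have h1 : ‖a * (a ^ (n+1) - b ^ (n+1))‖ ≤ M * ((n+1) * M ^ n * ‖a - b‖) := by
      calc ‖a * (a ^ (n+1) - b ^ (n+1))‖ ≤ ‖a‖ * ‖a ^ (n+1) - b ^ (n+1)‖ := norm_mul_le _ _
      _ ≤ M * ((n+1) * M ^ n * ‖a - b‖) := by
          apply mul_le_mul (le_max_left _ _) ih (norm_nonneg _) hM0
    have h2 : ‖(a - b) * b ^ (n+1)‖ ≤ ‖a - b‖ * M ^ (n+1) := by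
      calc ‖(a - b) * b ^ (n+1)‖ ≤ ‖a - b‖ * ‖b ^ (n+1)‖ := norm_mul_le _ _
      _ ≤ ‖a - b‖ * M ^ (n+1) := by
          apply mul_le_mul_of_nonneg_left _ (norm_nonneg _)
          exact (norm_pow_le' b (Nat.succ_pos n)).trans
            (pow_le_pow_left₀ (norm_nonneg b) (le_max_right _ _) _)
    calc ‖a ^ (n+2) - b ^ (n+2)‖ = ‖a * (a ^ (n+1) - b ^ (n+1)) + (a - b) * b ^ (n+1)‖ := by
          rw [key]
    _ ≤ ‖a * (a ^ (n+1) - b ^ (n+1))‖ + ‖(a - b) * b ^ (n+1)‖ := norm_add_le _ _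
    _ ≤ M * ((n+1) * M ^ n * ‖a - b‖) + ‖a - b‖ * M ^ (n+1) := add_le_add h1 h2
    _ = (↑(n + 1) + 1) * M ^ (n + 1) * ‖a - b‖ := by push_cast; ring

lemma exp_diff_bd {A : Type*} [NormedRing A] [NormedAlgebra ℝ A] [CompleteSpace A] (a b : A) :
    ‖NormedSpace.exp a - NormedSpace.exp b‖ ≤ ‖a - b‖ * Real.exp (max ‖a‖ ‖b‖) := by
  set M := max ‖a‖ ‖b‖ with hM
  have hM0 : 0 ≤ M := le_max_of_le_left (norm_nonneg a)
  have sa : Summable fun n : ℕ => (n !⁻¹ : ℝ) • a ^ n := NormedSpace.expSeries_summable' a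
  have sb : Summable fun n : ℕ => (n !⁻¹ : ℝ) • b ^ n := NormedSpace.expSeries_summable' b
  have hdiff : NormedSpace.exp a - NormedSpace.exp b
      = ∑' n : ℕ, ((n !⁻¹ : ℝ) • a ^ n - (n !⁻¹ : ℝ) • b ^ n) := by
    rw [NormedSpace.exp_eq_tsum ℝ, Summable.tsum_sub sa sb]
  have hsub : Summable fun n : ℕ => ((n !⁻¹ : ℝ) • a ^ n - (n !⁻¹ : ℝ) • b ^ n) := sa.sub sb
  have hzero : ((0:ℕ)!⁻¹ : ℝ) • a ^ 0 - ((0:ℕ)!⁻¹ : ℝ) • b ^ 0 = 0 := by simp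
  have hshift := Summable.tsum_eq_zero_add hsub
  have hbound : ∀ n : ℕ, ‖(((n+1) !⁻¹ : ℝ) • a ^ (n+1) - ((n+1) !⁻¹ : ℝ) • b ^ (n+1))‖
      ≤ ‖a - b‖ * (M ^ n / n !) := by
    intro n
    rw [← smul_sub, norm_smul, Real.norm_eq_abs, abs_of_nonneg (by positivity)]
    have h2 := pow_diff_bd a b n
    rw [← hM] at h2
    have hfs : (((n+1)! : ℕ) : ℝ) = ((n:ℝ)+1) * (n ! : ℝ) := by
      rw [Nat.factorial_succ]; push_cast; ring
    have hstep : ((((n+1)! : ℕ) : ℝ))⁻¹ * ‖a ^ (n+1) - b ^ (n+1)‖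
        ≤ ((((n+1)! : ℕ) : ℝ))⁻¹ * (((n:ℝ)+1) * M ^ n * ‖a - b‖) := by
      apply mul_le_mul_of_nonneg_left _ (by positivity)
      exact_mod_cast h2
    refine hstep.trans (le_of_eq ?_)
    rw [hfs]
    have hn : ((n:ℝ)+1) ≠ 0 := by positivity
    have hf : ((n ! : ℕ):ℝ) ≠ 0 := by positivity
    field_simp
  have hsummaj : Summable fun n : ℕ => ‖a - b‖ * (M ^ n / n !) :=
    (Real.summable_pow_div_factorial M).mul_left _
  have hsumnorm : Summable fun n : ℕ =>
      ‖(((n+1) !⁻¹ : ℝ) • a ^ (n+1) - ((n+1) !⁻¹ : ℝ) • b ^ (n+1))‖ :=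
    Summable.of_nonneg_of_le (fun n => norm_nonneg _) hbound hsummaj
  calc ‖NormedSpace.exp a - NormedSpace.exp b‖
      = ‖∑' n : ℕ, (((n+1) !⁻¹ : ℝ) • a ^ (n+1) - ((n+1) !⁻¹ : ℝ) • b ^ (n+1))‖ := by
        rw [hdiff, hshift, hzero, zero_add]
    _ ≤ ∑' n : ℕ, ‖(((n+1) !⁻¹ : ℝ) • a ^ (n+1) - ((n+1) !⁻¹ : ℝ) • b ^ (n+1))‖ :=
        norm_tsum_le_tsum_norm hsumnorm
    _ ≤ ∑' n : ℕ, ‖a - b‖ * (M ^ n / n !) := Summable.tsum_le_tsum hbound hsumnorm hsummaj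
    _ = ‖a - b‖ * ∑' n : ℕ, (M ^ n / n !) := tsum_mul_left
    _ = ‖a - b‖ * Real.exp M := by
        congr 1
        rw [Real.exp_eq_exp_ℝ, NormedSpace.exp_eq_tsum_div]

lemma exp_apply_diff_bd {E : Type*} [NormedAddCommGroup E] [NormedSpace ℝ E] [CompleteSpace E]
    (c cn : E →L[ℝ] E) {s T : ℝ} (hs0 : 0 ≤ s) (hsT : s ≤ T) (x : E) :
    ‖(NormedSpace.exp (s • c)) x - (NormedSpace.exp (s • cn)) x‖
      ≤ (T * Real.exp (T * max ‖c‖ ‖cn‖) * ‖c - cn‖) * ‖x‖ := by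
  have hT0 : 0 ≤ T := hs0.trans hsT
  have hMax0 : 0 ≤ max ‖c‖ ‖cn‖ := le_max_of_le_left (norm_nonneg c)
  have h1 : ‖(NormedSpace.exp (s • c)) x - (NormedSpace.exp (s • cn)) x‖
      ≤ ‖NormedSpace.exp (s • c) - NormedSpace.exp (s • cn)‖ * ‖x‖ := by
    rw [← ContinuousLinearMap.sub_apply]
    exact ContinuousLinearMap.le_opNorm _ x
  have h2 := exp_diff_bd (s • c) (s • cn)
  have h3 : ‖s • c - s • cn‖ = s * ‖c - cn‖ := by
    rw [← smul_sub, norm_smul, Real.norm_eq_abs, abs_of_nonneg hs0]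
  have h4 : max ‖s • c‖ ‖s • cn‖ = s * max ‖c‖ ‖cn‖ := by
    rw [norm_smul s c, norm_smul s cn, Real.norm_eq_abs, abs_of_nonneg hs0]
    exact (mul_max_of_nonneg _ _ hs0).symm
  rw [h3, h4] at h2
  refine h1.trans (le_trans (mul_le_mul_of_nonneg_right h2 (norm_nonneg x)) ?_)
  apply mul_le_mul_of_nonneg_right _ (norm_nonneg x)
  have hexp : Real.exp (s * max ‖c‖ ‖cn‖) ≤ Real.exp (T * max ‖c‖ ‖cn‖) :=
    Real.exp_le_exp.2 (mul_le_mul_of_nonneg_right hsT hMax0)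
  calc s * ‖c - cn‖ * Real.exp (s * max ‖c‖ ‖cn‖)
      ≤ T * ‖c - cn‖ * Real.exp (T * max ‖c‖ ‖cn‖) := by
        apply mul_le_mul (mul_le_mul_of_nonneg_right hsT (norm_nonneg _)) hexp
          (Real.exp_pos _).le (by positivity)
    _ = T * Real.exp (T * max ‖c‖ ‖cn‖) * ‖c - cn‖ := by ring

lemma lower_mem_iff {s : Set ℕ} (hs : s.Finite)
    (hlow : ∀ ⦃i j : ℕ⦄, i ≤ j → j ∈ s → i ∈ s) : ∀ i, i ∈ s ↔ i < s.ncard := by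
  intro i
  constructor
  · intro hi
    have hsub : Set.Iic i ⊆ s := fun j hj => hlow hj hi
    have h := Set.ncard_le_ncard hsub hs
    have : (Set.Iic i).ncard = i + 1 := by
      rw [← Finset.coe_Iic, Set.ncard_coe_finset, Nat.card_Iic]
    omega
  · intro hi
    by_contra hn
    have hsub : s ⊆ Set.Iio i := by
      intro j hj
      by_contra h
      simp only [Set.mem_Iio, not_lt] at h
      exact hn (hlow h hj)
    have h := Set.ncard_le_ncard hsub (Set.finite_Iio i)
    have : (Set.Iio i).ncard = i := by
      rw [← Finset.coe_Iio, Set.ncard_coe_finset, Nat.card_Iio]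
    omega

lemma indep_mono' {Ω : Type*} {mΩ : MeasurableSpace Ω} {μ : Measure Ω}
    {m₁ m₂ m₁' m₂' : MeasurableSpace Ω} (h : Indep m₁ m₂ μ) (h1 : m₁' ≤ m₁) (h2 : m₂' ≤ m₂) :
    Indep m₁' m₂' μ := fun t1 t2 ht1 ht2 => h t1 t2 (h1 _ ht1) (h2 _ ht2)

lemma sum_exp_div (θ : ℝ) : ∑' k : ℕ, θ ^ k / k ! = Real.exp θ := by
  rw [Real.exp_eq_exp_ℝ, NormedSpace.exp_eq_tsum_div]

lemma poisson_fact1 (θ : ℝ) :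
    Summable (fun k : ℕ => Real.exp (-θ) * θ ^ k / k ! * k) ∧
    ∑' k : ℕ, Real.exp (-θ) * θ ^ k / k ! * (k : ℝ) = θ := by
  set u : ℕ → ℝ := fun k => Real.exp (-θ) * θ ^ k / k ! * k with hu
  have hshift : (fun k : ℕ => u (k + 1)) = fun k : ℕ => Real.exp (-θ) * θ * (θ ^ k / k !) := by
    funext k
    have h1 : (((k+1)! : ℕ) : ℝ) = ((k:ℝ)+1) * (k ! : ℝ) := by
      rw [Nat.factorial_succ]; push_cast; ring
    have h2 : ((k ! : ℕ) : ℝ) ≠ 0 := by positivity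
    have h3 : ((k:ℝ)+1) ≠ 0 := by positivity
    simp only [hu]
    rw [h1]
    push_cast
    field_simp
    ring
  have hs1 : Summable fun k => u (k + 1) := by
    rw [hshift]; exact (Real.summable_pow_div_factorial θ).mul_left _
  have hsum : Summable u := by
    rw [← summable_nat_add_iff 1]; exact hs1
  refine ⟨hsum, ?_⟩
  have h0 : u 0 = 0 := by simp [hu]
  rw [Summable.tsum_eq_zero_add hsum, h0, zero_add, hshift, tsum_mul_left, sum_exp_div, Real.exp_neg]
  field_simp

lemma poisson_fact2 (θ : ℝ) :
    Summable (fun k : ℕ => Real.exp (-θ) * θ ^ k / k ! * ((k:ℝ) ^ 2 - k)) ∧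
    ∑' k : ℕ, Real.exp (-θ) * θ ^ k / k ! * ((k:ℝ) ^ 2 - k) = θ ^ 2 := by
  set v : ℕ → ℝ := fun k => Real.exp (-θ) * θ ^ k / k ! * ((k:ℝ) ^ 2 - k) with hv
  have hshift : (fun k : ℕ => v (k + 1 + 1)) = fun k : ℕ => Real.exp (-θ) * θ ^ 2 * (θ ^ k / k !) := by
    funext k
    have h1 : (((k+1+1)! : ℕ) : ℝ) = ((k:ℝ)+2) * (((k:ℝ)+1) * (k ! : ℝ)) := by
      rw [Nat.factorial_succ, Nat.factorial_succ]; push_cast; ring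
    have h2 : ((k ! : ℕ) : ℝ) ≠ 0 := by positivity
    have h3 : ((k:ℝ)+1) ≠ 0 := by positivity
    have h4 : ((k:ℝ)+2) ≠ 0 := by positivity
    simp only [hv]
    rw [h1]
    push_cast
    field_simp
    ring
  have hs2 : Summable fun k => v (k + 1 + 1) := by
    rw [hshift]; exact (Real.summable_pow_div_factorial θ).mul_left _
  have hs1 : Summable fun k => v (k + 1) := by
    rw [← summable_nat_add_iff 1]; exact hs2
  have hsum : Summable v := by
    rw [← summable_nat_add_iff 1]; exact hs1
  refine ⟨hsum, ?_⟩
  have h0 : v 0 = 0 := by simp [hv]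
  have h1 : v 1 = 0 := by simp [hv]
  rw [Summable.tsum_eq_zero_add hsum, h0, zero_add, Summable.tsum_eq_zero_add hs1, h1, zero_add, hshift,
    tsum_mul_left, sum_exp_div, Real.exp_neg]
  field_simp

lemma sq_add_bd (x y z : ℝ) : (z * (x + y)) ^ 2 ≤ 2 * z ^ 2 * x ^ 2 + 2 * z ^ 2 * y ^ 2 := by
  nlinarith [mul_nonneg (sq_nonneg z) (sq_nonneg (x - y))]

set_option maxHeartbeats 1000000

/-- For variance processes `V(t) = exp(t𝔠)V₀ + ∑_{τ_i ≤ t} exp((t−τ_i)𝔠) X_i`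
and `Vⁿ(t) = exp(t𝔠ⁿ)V₀ + ∑_{τ_i ≤ t} exp((t−τ_i)𝔠ⁿ) X_i` with the same initial value and
driving compound Poisson process (`N(T)` Poisson with parameter `λT`, i.i.d. square-integrable
jumps independent of `N(T)`),
`E[sup_{0≤t≤T} ‖V(t) − Vⁿ(t)‖²] ≤ C(T) ‖𝔠 − 𝔠ⁿ‖²` with
`C(T) = 2T² e^{2T max(‖𝔠‖,‖𝔠ⁿ‖)} (E‖V₀‖² + λT E‖X₁‖² + λ²T² (E‖X₁‖)²)`. -/
theorem stmt13 {E : Type*} [NormedAddCommGroup E] [InnerProductSpace ℝ E] [CompleteSpace E]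
    [SecondCountableTopology E] [MeasurableSpace E] [BorelSpace E]
    {Ω : Type*} [MeasurableSpace Ω] (μ : Measure Ω) [IsProbabilityMeasure μ]
    (c cn : E →L[ℝ] E) (lam T : ℝ) (hlam : 0 < lam) (hT : 0 < T)
    (τ : ℕ → Ω → ℝ) (hτpos : ∀ i ω, 0 < τ i ω)
    (hτmono : ∀ ω, StrictMono fun i => τ i ω) (hτmeas : ∀ i, Measurable (τ i))
    (hfin : ∀ t : ℝ, ∀ᵐ ω ∂μ, {i : ℕ | τ i ω ≤ t}.Finite)
    (Nf : ℝ → Ω → ℕ) (hNf : ∀ t ω, Nf t ω = Set.ncard {i : ℕ | τ i ω ≤ t})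
    (hpois : ∀ k : ℕ, μ {ω | Nf T ω = k}
        = ENNReal.ofReal (Real.exp (-(lam * T)) * (lam * T) ^ k / k.factorial))
    (X : ℕ → Ω → E) (hXmeas : ∀ i, Measurable (X i))
    (hident : ∀ i, IdentDistrib (X i) (X 0) μ μ)
    (hindep : iIndepFun X μ)
    (hNindep : Indep (MeasurableSpace.comap (Nf T) inferInstance)
      (⨆ i, MeasurableSpace.comap (X i) inferInstance) μ)
    (hX2 : Integrable (fun ω => ‖X 0 ω‖ ^ 2) μ)
    (V₀ : Ω → E) (hV₀ : Integrable (fun ω => ‖V₀ ω‖ ^ 2) μ)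
    (V Vn : ℝ → Ω → E)
    (hV : ∀ t ω, V t ω = (NormedSpace.exp (t • c)) (V₀ ω)
        + ∑ i ∈ Finset.range (Nf t ω), (NormedSpace.exp ((t - τ i ω) • c)) (X i ω))
    (hVn : ∀ t ω, Vn t ω = (NormedSpace.exp (t • cn)) (V₀ ω)
        + ∑ i ∈ Finset.range (Nf t ω), (NormedSpace.exp ((t - τ i ω) • cn)) (X i ω)) :
    (∫ ω, (⨆ t : Set.Icc (0:ℝ) T, ‖V t.1 ω - Vn t.1 ω‖ ^ 2) ∂μ)
      ≤ (2 * T ^ 2 * Real.exp (2 * T * max ‖c‖ ‖cn‖) *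
          ((∫ ω, ‖V₀ ω‖ ^ 2 ∂μ) + lam * T * (∫ ω, ‖X 0 ω‖ ^ 2 ∂μ)
            + lam ^ 2 * T ^ 2 * (∫ ω, ‖X 0 ω‖ ∂μ) ^ 2))
        * ‖c - cn‖ ^ 2 := by
  classical
  have hM0 : 0 ≤ max ‖c‖ ‖cn‖ := le_max_of_le_left (norm_nonneg c)
  set M : ℝ := max ‖c‖ ‖cn‖ with hM
  set K : ℝ := T * Real.exp (T * M) * ‖c - cn‖ with hK
  have hK0 : 0 ≤ K := by positivity
  set Y : ℕ → Ω → ℝ := fun i => (fun x : E => ‖x‖) ∘ X i with hYdef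
  have hYa : ∀ i ω, Y i ω = ‖X i ω‖ := fun i ω => rfl
  have hYmeas : ∀ i, Measurable (Y i) := fun i => (hXmeas i).norm
  have hYnn : ∀ i ω, 0 ≤ Y i ω := fun i ω => norm_nonneg _
  set f : ℕ → Ω → ℝ := fun k ω => ∑ i ∈ Finset.range k, Y i ω with hfdef
  -- lower set structure
  have hlowset : ∀ (ω : Ω) (u : ℝ) ⦃i j : ℕ⦄, i ≤ j → j ∈ {i : ℕ | τ i ω ≤ u}
      → i ∈ {i : ℕ | τ i ω ≤ u} := fun ω u i j hij hj =>
    le_trans ((hτmono ω).monotone hij) hj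
  -- measurability of Nf T
  have hNfT_fib : ∀ k : ℕ, {ω | Nf T ω = k + 1} = {ω | τ k ω ≤ T} ∩ {ω | T < τ (k+1) ω} := by
    intro k
    ext ω
    simp only [Set.mem_setOf_eq, Set.mem_inter_iff]
    constructor
    · intro hk
      have hfin' : {i : ℕ | τ i ω ≤ T}.Finite := by
        by_contra hinf
        have h0 := Set.Infinite.ncard hinf
        rw [hNf] at hk
        omega
      have hm := lower_mem_iff hfin' (hlowset ω T)
      rw [hNf] at hk
      constructor
      · exact (hm k).2 (by omega)
      · by_contra h
        push_neg at h
        have := (hm (k+1)).1 h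
        omega
    · rintro ⟨h1, h2⟩
      have hset : {i : ℕ | τ i ω ≤ T} = Set.Iio (k+1) := by
        ext i
        simp only [Set.mem_setOf_eq, Set.mem_Iio]
        constructor
        · intro hi
          by_contra h
          push_neg at h
          exact absurd (le_trans ((hτmono ω).monotone h) hi) (not_le.2 h2)
        · intro hi
          have hik : i ≤ k := by omega
          exact le_trans ((hτmono ω).monotone hik) h1
      rw [hNf, hset, ← Finset.coe_Iio, Set.ncard_coe_finset, Nat.card_Iio]
  have hfibmeas : ∀ k : ℕ, MeasurableSet {ω | Nf T ω = k + 1} := fun k => by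
    rw [hNfT_fib k]
    exact (measurableSet_le (hτmeas k) measurable_const).inter
      (measurableSet_lt measurable_const (hτmeas (k+1)))
  have hmeas0 : MeasurableSet {ω | Nf T ω = 0} := by
    have h : {ω | Nf T ω = 0} = (⋃ k : ℕ, {ω | Nf T ω = k + 1})ᶜ := by
      ext ω
      simp only [Set.mem_compl_iff, Set.mem_iUnion, Set.mem_setOf_eq]
      constructor
      · rintro h ⟨k, hk⟩; omega
      · intro h
        by_contra h0
        exact h ⟨Nf T ω - 1, by omega⟩
    rw [h]
    exact (MeasurableSet.iUnion hfibmeas).compl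
  have hNmeas : Measurable (Nf T) := by
    apply measurable_to_countable'
    intro k
    have : Nf T ⁻¹' {k} = {ω | Nf T ω = k} := by
      ext ω; simp [Set.mem_preimage]
    rw [this]
    cases k with
    | zero => exact hmeas0
    | succ k => exact hfibmeas k
  -- S
  set S : Ω → ℝ := fun ω => f (Nf T ω) ω with hSdef
  have hSmeas : Measurable S := by
    have h1 : Measurable fun p : Ω × ℕ => f p.2 p.1 := by
      apply measurable_from_prod_countable_left
      intro k
      have he : (fun x : Ω => f (x, k).2 (x, k).1) = f k := rfl
      rw [he]
      exact Finset.measurable_sum _ fun i _ => hYmeas i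
    exact h1.comp (measurable_id.prodMk hNmeas)
  have hS0 : ∀ ω, 0 ≤ S ω := fun ω => Finset.sum_nonneg fun i _ => norm_nonneg _
  set B : ℕ → Set Ω := fun k => Nf T ⁻¹' {k} with hBdef
  have hBmeas : ∀ k, MeasurableSet (B k) := fun k => hNmeas (measurableSet_singleton k)
  have hBdisj : Pairwise (Function.onFun Disjoint B) := by
    intro i j hij
    simp only [Function.onFun]
    apply Set.disjoint_left.2
    intro ω hi hj
    simp only [hBdef, Set.mem_preimage, Set.mem_singleton_iff] at hi hj
    exact hij (hi ▸ hj ▸ rfl)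
  have hBunion : (⋃ k, B k) = Set.univ := by
    ext ω; simp [hBdef]
  -- moments
  set m1 : ℝ := ∫ ω, ‖X 0 ω‖ ∂μ with hm1
  set m2 : ℝ := ∫ ω, ‖X 0 ω‖ ^ 2 ∂μ with hm2
  have hm1nn : 0 ≤ m1 := integral_nonneg fun ω => norm_nonneg _
  have hm2nn : 0 ≤ m2 := integral_nonneg fun ω => sq_nonneg _
  have hidentY : ∀ i, IdentDistrib (Y i) (Y 0) μ μ := fun i =>
    (hident i).comp measurable_norm
  have hY0mem : MeasureTheory.MemLp (Y 0) 2 μ :=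
    (memLp_two_iff_integrable_sq (hYmeas 0).aestronglyMeasurable).2 hX2
  have hYmem : ∀ i, MeasureTheory.MemLp (Y i) 2 μ := fun i =>
    (hidentY i).symm.memLp_snd hY0mem
  have hYint : ∀ i, Integrable (Y i) μ := fun i =>
    (hYmem i).integrable (by norm_num)
  have hYint1 : ∀ i, ∫ ω, Y i ω ∂μ = m1 := fun i => (hidentY i).integral_eq
  have hYsqint : ∀ i, Integrable (fun ω => (Y i ω) ^ 2) μ := fun i =>
    (memLp_two_iff_integrable_sq (hYmeas i).aestronglyMeasurable).1 (hYmem i)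
  have hYint2 : ∀ i, ∫ ω, (Y i ω) ^ 2 ∂μ = m2 := fun i =>
    ((hident i).comp (measurable_norm.pow_const 2)).integral_eq
  have hindepY : iIndepFun Y μ :=
    hindep.comp (fun _ => fun x : E => ‖x‖) (fun _ => measurable_norm)
  have hprod_int : ∀ i j, Integrable (fun ω => Y i ω * Y j ω) μ := by
    intro i j
    rcases eq_or_ne i j with rfl | hij
    · have : (fun ω => Y i ω * Y i ω) = fun ω => (Y i ω) ^ 2 := by
        funext ω; rw [sq]
      rw [this]; exact hYsqint i
    · exact (hindepY.indepFun hij).integrable_mul (hYint i) (hYint j)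
  have hprod_eq : ∀ i j, i ≠ j → ∫ ω, Y i ω * Y j ω ∂μ = m1 * m1 := by
    intro i j hij
    have h := (hindepY.indepFun hij).integral_mul_eq_mul_integral (hYint i).aestronglyMeasurable (hYint j).aestronglyMeasurable
    calc ∫ ω, Y i ω * Y j ω ∂μ = ∫ ω, (Y i * Y j) ω ∂μ := rfl
      _ = (∫ ω, Y i ω ∂μ) * ∫ ω, Y j ω ∂μ := h
      _ = m1 * m1 := by rw [hYint1 i, hYint1 j]
  have hf_int : ∀ k, Integrable (fun ω => (f k ω) ^ 2) μ := by
    intro k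
    have h : (fun ω => (f k ω) ^ 2)
        = fun ω => ∑ i ∈ Finset.range k, ∑ j ∈ Finset.range k, Y i ω * Y j ω := by
      funext ω; rw [sq, hfdef]; exact Finset.sum_mul_sum _ _ _ _
    rw [h]
    exact integrable_finset_sum _ fun i _ => integrable_finset_sum _ fun j _ => hprod_int i j
  have hf_eq : ∀ k : ℕ, ∫ ω, (f k ω) ^ 2 ∂μ = k * m2 + ((k:ℝ) ^ 2 - k) * m1 ^ 2 := by
    intro k
    have h : (fun ω => (f k ω) ^ 2)
        = fun ω => ∑ i ∈ Finset.range k, ∑ j ∈ Finset.range k, Y i ω * Y j ω := by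
      funext ω; rw [sq, hfdef]; exact Finset.sum_mul_sum _ _ _ _
    rw [h, integral_finset_sum _ (fun i _ =>
      integrable_finset_sum _ fun j _ => hprod_int i j)]
    have h2 : ∀ i ∈ Finset.range k, (∫ ω, ∑ j ∈ Finset.range k, Y i ω * Y j ω ∂μ)
        = ∑ j ∈ Finset.range k, ∫ ω, Y i ω * Y j ω ∂μ := fun i _ =>
      integral_finset_sum _ fun j _ => hprod_int i j
    rw [Finset.sum_congr rfl h2]
    have h3 : ∀ i ∈ Finset.range k, (∑ j ∈ Finset.range k, ∫ ω, Y i ω * Y j ω ∂μ)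
        = m2 + ((k:ℝ) - 1) * m1 ^ 2 := by
      intro i hi
      have h4 : ∀ j ∈ Finset.range k, (∫ ω, Y i ω * Y j ω ∂μ)
          = (if j = i then m2 - m1 ^ 2 else 0) + m1 ^ 2 := by
        intro j _
        rcases eq_or_ne i j with rfl | hij
        · rw [if_pos rfl, ← hYint2 i]
          have : (fun ω => Y i ω * Y i ω) = fun ω => (Y i ω) ^ 2 := by
            funext ω; rw [sq]
          rw [this]; ring
        · rw [if_neg (Ne.symm hij), hprod_eq i j hij]; ring
      rw [Finset.sum_congr rfl h4, Finset.sum_add_distrib, Finset.sum_ite_eq' (Finset.range k) i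
        (fun _ => m2 - m1 ^ 2), if_pos hi, Finset.sum_const, Finset.card_range]
      have hk1 : 1 ≤ k := by
        rcases Nat.eq_zero_or_pos k with h0 | h1
        · subst h0; simp at hi
        · omega
      have : ((k:ℝ)) = (k:ℕ) := rfl
      push_cast
      ring
    rw [Finset.sum_congr rfl h3, Finset.sum_const, Finset.card_range]
    push_cast
    ring
  -- probabilities
  set p : ℕ → ℝ := fun k => Real.exp (-(lam * T)) * (lam * T) ^ k / k ! with hpdef
  have hpnn : ∀ k, 0 ≤ p k := fun k => by
    have := Real.exp_pos (-(lam * T))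
    have h1 : (0:ℝ) ≤ (lam * T) ^ k := by positivity
    positivity
  have hμB : ∀ k, μ (B k) = ENNReal.ofReal (p k) := by
    intro k
    have h : B k = {ω | Nf T ω = k} := by
      ext ω; simp [hBdef]
    rw [h, hpois k]
  -- independence of indicator and f k squared
  have hUmeas : ∀ k, Measurable[MeasurableSpace.comap (Nf T) inferInstance]
      ((B k).indicator (fun _ => (1:ℝ))) := by
    intro k
    have hNT : Measurable[MeasurableSpace.comap (Nf T) inferInstance] (Nf T) :=
      measurable_iff_comap_le.2 le_rfl
    exact measurable_const.indicator (hNT (measurableSet_singleton k))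
  have hWmeas : ∀ k, Measurable[⨆ i, MeasurableSpace.comap (X i) inferInstance]
      (fun ω => (f k ω) ^ 2) := by
    intro k
    have hX' : ∀ i, Measurable[⨆ i, MeasurableSpace.comap (X i) inferInstance] (X i) :=
      fun i => measurable_iff_comap_le.2 (le_iSup (fun i => MeasurableSpace.comap (X i) inferInstance) i)
    exact (Finset.measurable_sum (Finset.range k)
      fun i _ => measurable_norm.comp (hX' i)).pow_const 2
  have hindepUW : ∀ k, IndepFun ((B k).indicator (fun _ => (1:ℝ))) (fun ω => (f k ω) ^ 2) μ :=
    fun k => indep_mono' hNindep (measurable_iff_comap_le.1 (hUmeas k))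
      (measurable_iff_comap_le.1 (hWmeas k))
  have hUint : ∀ k, Integrable ((B k).indicator (fun _ => (1:ℝ))) μ :=
    fun k => (integrable_const (1:ℝ)).indicator (hBmeas k)
  have hsetint : ∀ k, (∫ ω in B k, (f k ω) ^ 2 ∂μ)
      = p k * ((k:ℝ) * m2 + ((k:ℝ) ^ 2 - k) * m1 ^ 2) := by
    intro k
    have hmul : ((B k).indicator (fun _ => (1:ℝ)) * fun ω => (f k ω) ^ 2)
        = (B k).indicator (fun ω => (f k ω) ^ 2) := by
      funext ω
      by_cases hω : ω ∈ B k <;> simp [Set.indicator, hω]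
    have h := (hindepUW k).integral_mul_eq_mul_integral (hUint k).aestronglyMeasurable (hf_int k).aestronglyMeasurable
    rw [← integral_indicator (hBmeas k), ← hmul]
    calc (∫ ω, ((B k).indicator (fun _ => (1:ℝ)) * fun ω => (f k ω) ^ 2) ω ∂μ)
        = (∫ ω, (B k).indicator (fun _ => (1:ℝ)) ω ∂μ) * ∫ ω, (f k ω) ^ 2 ∂μ := h
      _ = p k * ((k:ℝ) * m2 + ((k:ℝ) ^ 2 - k) * m1 ^ 2) := by
          rw [integral_indicator_const (1:ℝ) (hBmeas k), measureReal_def, hμB k, hf_eq k,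
            ENNReal.toReal_ofReal (hpnn k)]
          simp
  -- Poisson series
  have hEknn : ∀ k : ℕ, 0 ≤ (k:ℝ) * m2 + ((k:ℝ) ^ 2 - k) * m1 ^ 2 := by
    intro k
    have h1 : (0:ℝ) ≤ (k:ℝ) ^ 2 - k := by
      rcases Nat.eq_zero_or_pos k with h0 | h1
      · subst h0; norm_num
      · have : (1:ℝ) ≤ (k:ℝ) := by exact_mod_cast h1
        nlinarith
    have h2 : (0:ℝ) ≤ (k:ℝ) := Nat.cast_nonneg k
    have h3 : (0:ℝ) ≤ m1 ^ 2 := sq_nonneg m1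
    nlinarith
  have hrw_a : (fun k : ℕ => p k * ((k:ℝ) * m2 + ((k:ℝ) ^ 2 - k) * m1 ^ 2))
      = fun k : ℕ => Real.exp (-(lam * T)) * (lam * T) ^ k / k ! * (k:ℝ) * m2
        + Real.exp (-(lam * T)) * (lam * T) ^ k / k ! * ((k:ℝ) ^ 2 - k) * m1 ^ 2 := by
    funext k
    simp only [hpdef]
    ring
  have ht1 := poisson_fact1 (lam * T)
  have ht2 := poisson_fact2 (lam * T)
  have hs1 : Summable (fun k : ℕ => Real.exp (-(lam * T)) * (lam * T) ^ k / k ! * (k:ℝ) * m2) := by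
    have := ht1.1.mul_right m2
    convert this using 2 with k
  have hs2 : Summable (fun k : ℕ =>
      Real.exp (-(lam * T)) * (lam * T) ^ k / k ! * ((k:ℝ) ^ 2 - k) * m1 ^ 2) := by
    have := ht2.1.mul_right (m1 ^ 2)
    convert this using 2 with k
  have hsum_a : Summable (fun k : ℕ => p k * ((k:ℝ) * m2 + ((k:ℝ) ^ 2 - k) * m1 ^ 2)) := by
    rw [hrw_a]; exact hs1.add hs2
  have hsum_a_val : ∑' k : ℕ, p k * ((k:ℝ) * m2 + ((k:ℝ) ^ 2 - k) * m1 ^ 2)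
      = lam * T * m2 + (lam * T) ^ 2 * m1 ^ 2 := by
    rw [hrw_a, Summable.tsum_add hs1 hs2]
    have e1 : ∑' k : ℕ, Real.exp (-(lam * T)) * (lam * T) ^ k / k ! * (k:ℝ) * m2
        = (lam * T) * m2 := by
      rw [show (fun k : ℕ => Real.exp (-(lam * T)) * (lam * T) ^ k / k ! * (k:ℝ) * m2)
        = fun k : ℕ => (Real.exp (-(lam * T)) * (lam * T) ^ k / k ! * (k:ℝ)) * m2 from rfl,
        tsum_mul_right, ht1.2]
    have e2 : ∑' k : ℕ, Real.exp (-(lam * T)) * (lam * T) ^ k / k ! * ((k:ℝ) ^ 2 - k) * m1 ^ 2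
        = (lam * T) ^ 2 * m1 ^ 2 := by
      rw [show (fun k : ℕ => Real.exp (-(lam * T)) * (lam * T) ^ k / k ! * ((k:ℝ) ^ 2 - k) * m1 ^ 2)
        = fun k : ℕ => (Real.exp (-(lam * T)) * (lam * T) ^ k / k ! * ((k:ℝ) ^ 2 - k)) * m1 ^ 2 from rfl,
        tsum_mul_right, ht2.2]
    rw [e1, e2]
  -- lintegral of S^2
  have hkey : (∫⁻ ω, ENNReal.ofReal ((S ω) ^ 2) ∂μ)
      = ENNReal.ofReal (lam * T * m2 + (lam * T) ^ 2 * m1 ^ 2) := by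
    have h1 : (∫⁻ ω, ENNReal.ofReal ((S ω) ^ 2) ∂μ)
        = ∑' k : ℕ, ∫⁻ ω in B k, ENNReal.ofReal ((S ω) ^ 2) ∂μ := by
      conv_lhs => rw [← Measure.restrict_univ (μ := μ), ← hBunion]
      exact lintegral_iUnion hBmeas hBdisj _
    have h2 : ∀ k : ℕ, (∫⁻ ω in B k, ENNReal.ofReal ((S ω) ^ 2) ∂μ)
        = ENNReal.ofReal (p k * ((k:ℝ) * m2 + ((k:ℝ) ^ 2 - k) * m1 ^ 2)) := by
      intro k
      have h3 : (∫⁻ ω in B k, ENNReal.ofReal ((S ω) ^ 2) ∂μ)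
          = ∫⁻ ω in B k, ENNReal.ofReal ((f k ω) ^ 2) ∂μ := by
        apply setLIntegral_congr_fun (hBmeas k)
        intro ω hω
        have hNk : Nf T ω = k := hω
        have : S ω = f k ω := by rw [hSdef]; simp only; rw [hNk]
        simp only [this]
      rw [h3, ← ofReal_integral_eq_lintegral_ofReal ((hf_int k).restrict)
        (ae_of_all _ fun ω => sq_nonneg _), hsetint k]
    rw [h1]
    rw [tsum_congr h2]
    rw [← ENNReal.ofReal_tsum_of_nonneg (fun k => mul_nonneg (hpnn k) (hEknn k)) hsum_a,
      hsum_a_val]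
  have hSsq_meas : Measurable (fun ω => (S ω) ^ 2) := hSmeas.pow_const 2
  have hSsq_int : Integrable (fun ω => (S ω) ^ 2) μ := by
    refine ⟨hSsq_meas.aestronglyMeasurable, ?_⟩
    rw [hasFiniteIntegral_iff_ofReal (ae_of_all _ fun ω => sq_nonneg _)]
    rw [hkey]
    exact ENNReal.ofReal_lt_top
  have hval_nn : 0 ≤ lam * T * m2 + (lam * T) ^ 2 * m1 ^ 2 := by
    have := mul_pos hlam hT
    have h3 : (0:ℝ) ≤ m1 ^ 2 := sq_nonneg m1
    nlinarith
  have hSsq_val : (∫ ω, (S ω) ^ 2 ∂μ) = lam * T * m2 + (lam * T) ^ 2 * m1 ^ 2 := by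
    rw [integral_eq_lintegral_of_nonneg_ae (ae_of_all _ fun ω => sq_nonneg _)
      hSsq_meas.aestronglyMeasurable, hkey, ENNReal.toReal_ofReal hval_nn]
  -- pointwise bound
  set g : Ω → ℝ := fun ω => 2 * K ^ 2 * ‖V₀ ω‖ ^ 2 + 2 * K ^ 2 * (S ω) ^ 2 with hgdef
  have hg_int : Integrable g μ := (hV₀.const_mul _).add (hSsq_int.const_mul _)
  have hbound : ∀ᵐ ω ∂μ, (⨆ t : Set.Icc (0:ℝ) T, ‖V t.1 ω - Vn t.1 ω‖ ^ 2) ≤ g ω := by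
    filter_upwards [hfin T] with ω hfinω
    haveI : Nonempty (Set.Icc (0:ℝ) T) := ⟨⟨0, le_refl 0, hT.le⟩⟩
    apply ciSup_le
    rintro ⟨t, ht0, htT⟩
    simp only
    have hfin_t : {i : ℕ | τ i ω ≤ t}.Finite :=
      hfinω.subset fun i hi => le_trans hi htT
    have hmem_t : ∀ i, τ i ω ≤ t ↔ i < Nf t ω := by
      intro i
      rw [hNf]
      exact lower_mem_iff hfin_t (hlowset ω t) i
    have hmem_T : ∀ i, τ i ω ≤ T ↔ i < Nf T ω := by
      intro i
      rw [hNf]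
      exact lower_mem_iff hfinω (hlowset ω T) i
    have hle_N : Nf t ω ≤ Nf T ω := by
      rcases Nat.eq_zero_or_pos (Nf t ω) with h0 | hpos
      · omega
      · have h1 : τ (Nf t ω - 1) ω ≤ t := (hmem_t _).2 (by omega)
        have h2 := (hmem_T (Nf t ω - 1)).1 (le_trans h1 htT)
        omega
    have hdiff : V t ω - Vn t ω
        = (NormedSpace.exp (t • c) - NormedSpace.exp (t • cn)) (V₀ ω)
          + ∑ i ∈ Finset.range (Nf t ω),
            ((NormedSpace.exp ((t - τ i ω) • c) - NormedSpace.exp ((t - τ i ω) • cn)) (X i ω)) := by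
      rw [hV, hVn]
      simp only [ContinuousLinearMap.sub_apply, Finset.sum_sub_distrib]
      abel
    have hnorm1 : ‖V t ω - Vn t ω‖ ≤ K * (‖V₀ ω‖ + S ω) := by
      rw [hdiff]
      have hb1 : ‖(NormedSpace.exp (t • c) - NormedSpace.exp (t • cn)) (V₀ ω)‖
          ≤ K * ‖V₀ ω‖ := by
        rw [ContinuousLinearMap.sub_apply]
        exact exp_apply_diff_bd c cn ht0 htT (V₀ ω)
      have hb2 : ‖∑ i ∈ Finset.range (Nf t ω),
          ((NormedSpace.exp ((t - τ i ω) • c) - NormedSpace.exp ((t - τ i ω) • cn)) (X i ω))‖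
          ≤ K * S ω := by
        refine (norm_sum_le _ _).trans ?_
        have hterm : ∀ i ∈ Finset.range (Nf t ω),
            ‖(NormedSpace.exp ((t - τ i ω) • c) - NormedSpace.exp ((t - τ i ω) • cn)) (X i ω)‖
            ≤ K * ‖X i ω‖ := by
          intro i hi
          have hτi : τ i ω ≤ t := (hmem_t i).2 (Finset.mem_range.1 hi)
          have hτip := hτpos i ω
          have h0' : (0:ℝ) ≤ t - τ i ω := by linarith
          have hT' : t - τ i ω ≤ T := by linarith
          rw [ContinuousLinearMap.sub_apply]
          exact exp_apply_diff_bd c cn h0' hT' (X i ω)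
        refine (Finset.sum_le_sum hterm).trans ?_
        rw [← Finset.mul_sum]
        apply mul_le_mul_of_nonneg_left _ hK0
        have hsub : Finset.range (Nf t ω) ⊆ Finset.range (Nf T ω) :=
          Finset.range_subset_range.2 hle_N
        exact Finset.sum_le_sum_of_subset_of_nonneg hsub fun i _ _ => norm_nonneg _
      calc ‖(NormedSpace.exp (t • c) - NormedSpace.exp (t • cn)) (V₀ ω)
            + ∑ i ∈ Finset.range (Nf t ω),
              ((NormedSpace.exp ((t - τ i ω) • c) - NormedSpace.exp ((t - τ i ω) • cn)) (X i ω))‖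
          ≤ ‖(NormedSpace.exp (t • c) - NormedSpace.exp (t • cn)) (V₀ ω)‖
            + ‖∑ i ∈ Finset.range (Nf t ω),
              ((NormedSpace.exp ((t - τ i ω) • c) - NormedSpace.exp ((t - τ i ω) • cn)) (X i ω))‖ :=
            norm_add_le _ _
        _ ≤ K * ‖V₀ ω‖ + K * S ω := add_le_add hb1 hb2
        _ = K * (‖V₀ ω‖ + S ω) := by ring
    have h1 : ‖V t ω - Vn t ω‖ ^ 2 ≤ (K * (‖V₀ ω‖ + S ω)) ^ 2 :=
      pow_le_pow_left₀ (norm_nonneg _) hnorm1 2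
    refine h1.trans ?_
    simp only [hgdef]
    exact sq_add_bd (‖V₀ ω‖) (S ω) K
  have hnn : 0 ≤ᵐ[μ] fun ω => (⨆ t : Set.Icc (0:ℝ) T, ‖V t.1 ω - Vn t.1 ω‖ ^ 2) :=
    ae_of_all _ fun ω => Real.iSup_nonneg fun t => sq_nonneg _
  have hle := integral_mono_of_nonneg hnn hg_int hbound
  refine hle.trans (le_of_eq ?_)
  have hgint_eq : (∫ ω, g ω ∂μ)
      = 2 * K ^ 2 * (∫ ω, ‖V₀ ω‖ ^ 2 ∂μ) + 2 * K ^ 2 * (lam * T * m2 + (lam * T) ^ 2 * m1 ^ 2) := by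
    simp only [hgdef]
    rw [integral_add (hV₀.const_mul _) (hSsq_int.const_mul _), integral_const_mul,
      integral_const_mul, hSsq_val]
  rw [hgint_eq, hK]
  have hexp2 : Real.exp (2 * T * M) = Real.exp (T * M) * Real.exp (T * M) := by
    rw [← Real.exp_add]; ring_nf
  rw [hM] at hexp2 ⊢
  rw [hexp2]
  ring
end

section
/- Let ℋ be a real separable Hilbert space with orthonormal basis (E_j)_{j≥1}, and let 𝔠 be a bounded linear operator on ℋ with 𝔠 E_j = Λ_j E_j for real eigenvalues Λ_j satisfying Λ_j → 0. Let (J_n)_{n≥1} be nested finite subsets of ℕ with ⋃_n J_n = ℕ, Π_n the orthogonal projection onto span{E_j : j ∈ J_n}, and 𝔠ⁿ = Π_n 𝔠 Π_n. Let λ, T > 0, let (τ_i)_{i≥1} be strictly increasing positive random times with N(t) = #{i : τ_i ≤ t} finite a.s. and N(T) Poisson-distributed with parameter λT, let (X_i)_{i≥1} be i.i.d. ℋ-valued random variables independent of N(T) with E[‖X₁‖²] < ∞, and let V₀ satisfy E[‖V₀‖²] < ∞. Define V(t) = exp(t𝔠)V₀ + ∑_{i : τ_i ≤ t} exp((t −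 τ_i)𝔠) X_i and Vⁿ(t) = exp(t𝔠ⁿ)V₀ + ∑_{i : τ_i ≤ t} exp((t − τ_i)𝔠ⁿ) X_i. Then E[ sup_{0 ≤ t ≤ T} ‖V(t) − Vⁿ(t)‖² ] ≤ C(T) · sup_{m ∉ J_n} Λ_m², where C(T) = 4T² e^{2T‖𝔠‖_op} ( E[‖V₀‖²] + λT E[‖X₁‖²] + λ²T² (E[‖X₁‖])² ), and the right-hand side converges to 0 as n → ∞. -/
open MeasureTheory ProbabilityTheory
open scoped InnerProductSpace

lemma aux_exp_abs (a : ℝ) : |Real.exp a - 1| ≤ |a| * Real.exp |a| := by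
  rcases le_or_gt 0 a with h | h
  · rw [abs_of_nonneg h, abs_of_nonneg (by nlinarith [Real.one_le_exp h] : (0:ℝ) ≤ Real.exp a - 1)]
    have h1 : -a + 1 ≤ Real.exp (-a) := Real.add_one_le_exp (-a)
    have h2 : Real.exp (-a) * Real.exp a = 1 := by
      rw [← Real.exp_add]; simp
    nlinarith [Real.exp_pos a]
  · rw [abs_of_neg h, abs_of_nonpos (by nlinarith [Real.exp_lt_one_iff.mpr h] : Real.exp a - 1 ≤ 0)]
    have h1 : a + 1 ≤ Real.exp a := Real.add_one_le_exp a
    have h2 : 1 ≤ Real.exp (-a) := Real.one_le_exp (by linarith)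
    nlinarith

lemma aux_lower_eq_Iio {A : Set ℕ} (hA : ∀ i j, i ≤ j → j ∈ A → i ∈ A) (hfin : A.Finite) :
    A = Set.Iio A.ncard := by
  have hne : ∃ k, k ∉ A := by
    have := hfin.infinite_compl
    obtain ⟨k, hk⟩ := this.nonempty
    exact ⟨k, hk⟩
  classical
  set k := Nat.find hne with hk
  have hAk : A = Set.Iio k := by
    ext i
    simp only [Set.mem_Iio]
    constructor
    · intro hi
      by_contra hlt
      push_neg at hlt
      exact Nat.find_spec hne (hA k i hlt hi)
    · intro hi
      have := Nat.find_min hne hi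
      simpa using this
  have : A.ncard = k := by
    rw [hAk, ← Finset.coe_range, Set.ncard_coe_finset, Finset.card_range]
  rw [this]; exact hAk

lemma aux_exp_diag {E : Type*} [NormedAddCommGroup E] [NormedSpace ℝ E] [CompleteSpace E]
    (c : E →L[ℝ] E) (x : E) (l : ℝ) (h : c x = l • x) (s : ℝ) :
    NormedSpace.exp (s • c) x = Real.exp (s * l) • x := by
  have hpow : ∀ n : ℕ, ((s • c) ^ n) x = (s * l) ^ n • x := by
    intro n
    induction n with
    | zero => simp
    | succ n ih =>
      rw [pow_succ, ContinuousLinearMap.mul_apply]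
      have : (s • c) x = (s * l) • x := by
        rw [ContinuousLinearMap.smul_apply, h, smul_smul]
      rw [this, ContinuousLinearMap.map_smul, ih, smul_smul, ← pow_succ']
  have h1 : HasSum (fun n : ℕ => ((n.factorial :ℝ)⁻¹ • (s • c) ^ n))
      (NormedSpace.exp (s • c)) := by
    rw [NormedSpace.exp_eq_tsum (𝕂 := ℝ)]
    exact (NormedSpace.expSeries_summable' (𝕂 := ℝ) (s • c)).hasSum
  have h2 := h1.mapL (ContinuousLinearMap.apply ℝ E x)
  have h3 : HasSum (fun n : ℕ => ((s * l) ^ n / n.factorial) • x)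
      (NormedSpace.exp (s • c) x) := by
    convert h2 using 2 with n
    simp only [ContinuousLinearMap.apply_apply, ContinuousLinearMap.smul_apply, hpow,
      smul_smul, div_eq_inv_mul]
    rfl
  have h4 : HasSum (fun n : ℕ => ((s * l) ^ n / n.factorial) • x)
      (Real.exp (s * l) • x) := by
    rw [Real.exp_eq_exp_ℝ]
    exact (NormedSpace.expSeries_div_hasSum_exp (s * l)).smul_const x
  exact h3.unique h4

lemma aux_diag_norm {E : Type*} [NormedAddCommGroup E] [InnerProductSpace ℝ E]
    (b : HilbertBasis ℕ ℝ E) (D : E →L[ℝ] E) (d : ℕ → ℝ)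
    (hD : ∀ j, D (b j) = d j • b j) (M : ℝ) (hM : 0 ≤ M) (hd : ∀ j, |d j| ≤ M) (x : E) :
    ‖D x‖ ≤ M * ‖x‖ := by
  have key : ∀ i, ⟪b i, D x⟫_ℝ = d i * ⟪b i, x⟫_ℝ := by
    intro i
    have h1 : HasSum (fun j => b.repr x j • b j) x := b.hasSum_repr x
    have h2 : HasSum (fun j => (b.repr x j * d j) • b j) (D x) := by
      have := h1.mapL D
      convert this using 2 with j
      rw [ContinuousLinearMap.map_smul, hD, smul_smul]
    have h3 := h2.mapL (innerSL ℝ (b i))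
    have h4 : HasSum (fun j => if j = i then d i * ⟪b i, x⟫_ℝ else 0) (⟪b i, D x⟫_ℝ) := by
      convert h3 using 2 with j
      · rfl
      swap
      · rfl
      rw [innerSL_apply_apply, real_inner_smul_right]
      rcases eq_or_ne j i with rfl | hji
      · rw [if_pos rfl, orthonormal_iff_ite.mp b.orthonormal, if_pos rfl,
          b.repr_apply_apply]
        ring
      · rw [if_neg hji, orthonormal_iff_ite.mp b.orthonormal, if_neg (Ne.symm hji)]
        ring
    have h5 : HasSum (fun j => if j = i then d i * ⟪b i, x⟫_ℝ else 0)
        (d i * ⟪b i, x⟫_ℝ) := hasSum_ite_eq i _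
    exact h4.unique h5
  -- Parseval
  have parseval : ∀ y : E, ∑' i, ⟪b i, y⟫_ℝ ^ 2 = ‖y‖ ^ 2 := by
    intro y
    have := b.tsum_inner_mul_inner y y
    rw [real_inner_self_eq_norm_sq] at this
    rw [← this]
    congr 1; ext i
    rw [real_inner_comm y (b i)]; ring
  have hsummy : ∀ y : E, Summable (fun i => ⟪b i, y⟫_ℝ ^ 2) := by
    intro y
    have := b.summable_inner_mul_inner y y
    convert this using 2 with i
    · rfl
    rw [real_inner_comm y (b i)]; ring
  have hDx2 : ‖D x‖ ^ 2 ≤ M ^ 2 * ‖x‖ ^ 2 := by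
    rw [← parseval (D x), ← parseval x, ← tsum_mul_left]
    refine Summable.tsum_le_tsum (fun i => ?_) ?_ ?_
    · rw [key]
      have h6 : (d i) ^ 2 ≤ M ^ 2 := sq_le_sq' (neg_le_of_abs_le (hd i)) (le_of_abs_le (hd i))
      calc (d i * ⟪b i, x⟫_ℝ) ^ 2 = d i ^ 2 * ⟪b i, x⟫_ℝ ^ 2 := by ring
        _ ≤ M ^ 2 * ⟪b i, x⟫_ℝ ^ 2 := by nlinarith [sq_nonneg (⟪b i, x⟫_ℝ)]
    · exact hsummy (D x)
    · exact (hsummy x).mul_left _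
  have h7 : (0:ℝ) ≤ M * ‖x‖ := mul_nonneg hM (norm_nonneg x)
  nlinarith [norm_nonneg (D x)]

lemma aux_card_char (f : ℕ → ℝ) (hf : StrictMono f) (T : ℝ) (k : ℕ) :
    {i : ℕ | f i ≤ T}.ncard = k ↔
      ((∀ i < k, f i ≤ T) ∧ T < f k) ∨ (k = 0 ∧ ∀ i, f i ≤ T) := by
  set A := {i : ℕ | f i ≤ T} with hA
  have hlow : ∀ i j, i ≤ j → j ∈ A → i ∈ A := fun i j hij hj => le_trans (hf.monotone hij) hj
  by_cases hall : ∀ i, f i ≤ T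
  · have hAuniv : A = Set.univ := by ext i; simp [hA, hall i]
    have hzero : A.ncard = 0 := by rw [hAuniv]; exact Set.Infinite.ncard Set.infinite_univ
    constructor
    · intro hk; right; exact ⟨by rw [← hk, hzero], hall⟩
    · rintro (⟨_, hT⟩ | ⟨hk0, _⟩)
      · exact absurd (hall k) (not_le.mpr hT)
      · rw [hzero, hk0]
  · push_neg at hall
    obtain ⟨i0, hi0⟩ := hall
    have hfin : A.Finite := by
      apply Set.Finite.subset (Set.finite_Iio i0)
      intro i hi
      simp only [Set.mem_Iio]
      by_contra hlt
      push_neg at hlt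
      exact absurd (le_trans (hf.monotone hlt) hi) (not_le.mpr hi0)
    have hIio := aux_lower_eq_Iio hlow hfin
    constructor
    · intro hk
      left
      refine ⟨fun i hik => ?_, ?_⟩
      · have : i ∈ A := by rw [hIio, hk]; exact hik
        exact this
      · have : k ∉ A := by rw [hIio, hk]; simp
        exact not_le.mp this
    · rintro (⟨hlt, hT⟩ | ⟨hk0, hall'⟩)
      · have hAk : A = Set.Iio k := by
          ext i
          simp only [Set.mem_Iio, hA, Set.mem_setOf_eq]
          constructor
          · intro hi; by_contra h; push_neg at h
            exact (not_le.mpr hT) (le_trans (hf.monotone h) hi)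
          · exact fun h => hlt i h
        rw [hAk, ← Finset.coe_range, Set.ncard_coe_finset, Finset.card_range]
      · exact absurd (hall' i0) (not_le.mpr hi0)

lemma aux_pois0 (m : ℝ) :
    HasSum (fun k : ℕ => m ^ k / k.factorial) (Real.exp m) := by
  rw [Real.exp_eq_exp_ℝ]; exact NormedSpace.expSeries_div_hasSum_exp m

lemma aux_pois1 (m : ℝ) :
    HasSum (fun k : ℕ => (k : ℝ) * (m ^ k / k.factorial)) (m * Real.exp m) := by
  have h1 : HasSum (fun k : ℕ => ((k + 1 : ℕ) : ℝ) * (m ^ (k + 1) / (k + 1).factorial))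
      (m * Real.exp m) := by
    convert (aux_pois0 m).mul_left m using 2 with k
    · rfl
    have hfac : ((k + 1).factorial : ℝ) = (k + 1) * k.factorial := by
      rw [Nat.factorial_succ]; push_cast; ring
    rw [hfac]
    have h2 : (k.factorial : ℝ) ≠ 0 := Nat.cast_ne_zero.mpr k.factorial_ne_zero
    have h3 : ((k : ℝ) + 1) ≠ 0 := by positivity
    push_cast
    field_simp
    ring
  have := (hasSum_nat_add_iff (f := fun k : ℕ => (k : ℝ) * (m ^ k / k.factorial)) 1).mp h1
  simpa using this

lemma aux_pois2 (m : ℝ) :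
    HasSum (fun k : ℕ => ((k : ℝ)) ^ 2 * (m ^ k / k.factorial))
      (m * (m * Real.exp m) + m * Real.exp m) := by
  have h1 : HasSum (fun k : ℕ => ((k + 1 : ℕ) : ℝ) ^ 2 * (m ^ (k + 1) / (k + 1).factorial))
      (m * (m * Real.exp m) + m * Real.exp m) := by
    have hrhs := ((aux_pois1 m).mul_left m).add ((aux_pois0 m).mul_left m)
    convert hrhs using 2 with k
    · rfl
    have hfac : ((k + 1).factorial : ℝ) = (k + 1) * k.factorial := by
      rw [Nat.factorial_succ]; push_cast; ring
    rw [hfac]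
    have h2 : (k.factorial : ℝ) ≠ 0 := Nat.cast_ne_zero.mpr k.factorial_ne_zero
    have h3 : ((k : ℝ) + 1) ≠ 0 := by positivity
    push_cast
    field_simp
    ring
  have := (hasSum_nat_add_iff (f := fun k : ℕ => ((k : ℝ)) ^ 2 * (m ^ k / k.factorial)) 1).mp h1
  simpa using this

set_option maxHeartbeats 2000000 in
/-- Let `𝔠` be diagonal in an orthonormal basis `(E_j)` of `ℋ` with eigenvalues
`Λ_j → 0`, `𝔠ⁿ = Π_n 𝔠 Π_n` the Galerkin approximations through nested exhausting finite sets
`J_n`, and let `V`, `Vⁿ` be the variance processes with the same initial value `V₀` and the same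
driving compound Poisson process (`N(T)` Poisson with parameter `λT`, i.i.d. square-integrable
jumps independent of `N(T)`).  Then
`E[sup_{0≤t≤T} ‖V(t) − Vⁿ(t)‖²] ≤ C(T) sup_{m ∉ J_n} Λ_m²` with
`C(T) = 4T² e^{2T‖𝔠‖} (E‖V₀‖² + λT E‖X₁‖² + λ²T² (E‖X₁‖)²)`, and the right-hand side
converges to `0` as `n → ∞`. -/
theorem stmt14 {E : Type*} [NormedAddCommGroup E] [InnerProductSpace ℝ E] [CompleteSpace E]
    [SecondCountableTopology E] [MeasurableSpace E] [BorelSpace E]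
    {Ω : Type*} [MeasurableSpace Ω] (μ : Measure Ω) [IsProbabilityMeasure μ]
    (b : HilbertBasis ℕ ℝ E) (c : E →L[ℝ] E) (Λ : ℕ → ℝ)
    (heig : ∀ j, c (b j) = Λ j • b j)
    (hΛ : Filter.Tendsto Λ Filter.atTop (nhds 0))
    (J : ℕ → Finset ℕ) (hnest : ∀ n, J n ⊆ J (n + 1)) (hcover : ∀ m, ∃ n, m ∈ J n)
    (P : ℕ → E →L[ℝ] E) (hP : ∀ n x, P n x = ∑ j ∈ J n, ⟪x, b j⟫_ℝ • b j)
    (cn : ℕ → E →L[ℝ] E) (hcn : ∀ n, cn n = P n ∘L c ∘L P n)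
    (lam T : ℝ) (hlam : 0 < lam) (hT : 0 < T)
    (τ : ℕ → Ω → ℝ) (hτpos : ∀ i ω, 0 < τ i ω)
    (hτmono : ∀ ω, StrictMono fun i => τ i ω) (hτmeas : ∀ i, Measurable (τ i))
    (hfin : ∀ t : ℝ, ∀ᵐ ω ∂μ, {i : ℕ | τ i ω ≤ t}.Finite)
    (Nf : ℝ → Ω → ℕ) (hNf : ∀ t ω, Nf t ω = Set.ncard {i : ℕ | τ i ω ≤ t})
    (hpois : ∀ k : ℕ, μ {ω | Nf T ω = k}
        = ENNReal.ofReal (Real.exp (-(lam * T)) * (lam * T) ^ k / k.factorial))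
    (X : ℕ → Ω → E) (hXmeas : ∀ i, Measurable (X i))
    (hident : ∀ i, IdentDistrib (X i) (X 0) μ μ)
    (hindep : iIndepFun X μ)
    (hNindep : Indep (MeasurableSpace.comap (Nf T) inferInstance)
      (⨆ i, MeasurableSpace.comap (X i) inferInstance) μ)
    (hX2 : Integrable (fun ω => ‖X 0 ω‖ ^ 2) μ)
    (V₀ : Ω → E) (hV₀ : Integrable (fun ω => ‖V₀ ω‖ ^ 2) μ)
    (V : ℝ → Ω → E) (Vn : ℕ → ℝ → Ω → E)
    (hV : ∀ t ω, V t ω = (NormedSpace.exp (t • c)) (V₀ ω)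
        + ∑ i ∈ Finset.range (Nf t ω), (NormedSpace.exp ((t - τ i ω) • c)) (X i ω))
    (hVn : ∀ n t ω, Vn n t ω = (NormedSpace.exp (t • cn n)) (V₀ ω)
        + ∑ i ∈ Finset.range (Nf t ω), (NormedSpace.exp ((t - τ i ω) • cn n)) (X i ω)) :
    (∀ n : ℕ,
      (∫ ω, (⨆ t : Set.Icc (0:ℝ) T, ‖V t.1 ω - Vn n t.1 ω‖ ^ 2) ∂μ)
        ≤ (4 * T ^ 2 * Real.exp (2 * T * ‖c‖) *
            ((∫ ω, ‖V₀ ω‖ ^ 2 ∂μ) + lam * T * (∫ ω, ‖X 0 ω‖ ^ 2 ∂μ)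
              + lam ^ 2 * T ^ 2 * (∫ ω, ‖X 0 ω‖ ∂μ) ^ 2))
          * ⨆ m : {m : ℕ // m ∉ J n}, Λ m.1 ^ 2) ∧
    Filter.Tendsto
      (fun n => (4 * T ^ 2 * Real.exp (2 * T * ‖c‖) *
            ((∫ ω, ‖V₀ ω‖ ^ 2 ∂μ) + lam * T * (∫ ω, ‖X 0 ω‖ ^ 2 ∂μ)
              + lam ^ 2 * T ^ 2 * (∫ ω, ‖X 0 ω‖ ∂μ) ^ 2))
          * ⨆ m : {m : ℕ // m ∉ J n}, Λ m.1 ^ 2)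
      Filter.atTop (nhds 0) := by
  classical
  set m : ℝ := lam * T with hm_def
  have hm : 0 < m := mul_pos hlam hT
  set Y : ℕ → Ω → ℝ := fun i ω => ‖X i ω‖ with hY_def
  set EY : ℝ := ∫ ω, ‖X 0 ω‖ ∂μ with hEY_def
  set EY2 : ℝ := ∫ ω, ‖X 0 ω‖ ^ 2 ∂μ with hEY2_def
  set EV0 : ℝ := ∫ ω, ‖V₀ ω‖ ^ 2 ∂μ with hEV0_def
  have hYmeas : ∀ i, Measurable (Y i) := fun i => (hXmeas i).norm
  have hYid : ∀ i, IdentDistrib (Y i) (Y 0) μ μ := fun i => (hident i).comp measurable_norm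
  have hY0mem : MemLp (Y 0) 2 μ :=
    (memLp_two_iff_integrable_sq (hYmeas 0).aestronglyMeasurable).mpr hX2
  have hYmem : ∀ i, MemLp (Y i) 2 μ := fun i => (hYid i).symm.memLp_snd hY0mem
  have hYint : ∀ i, Integrable (Y i) μ := fun i => (hYmem i).integrable one_le_two
  have hEYi : ∀ i, ∫ ω, Y i ω ∂μ = EY := fun i => (hYid i).integral_eq
  have hYsqid : ∀ i, IdentDistrib (fun ω => Y i ω ^ 2) (fun ω => Y 0 ω ^ 2) μ μ := fun i =>
    (hYid i).comp (measurable_id.pow_const 2)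
  have hYsqint : ∀ i, Integrable (fun ω => Y i ω ^ 2) μ := fun i =>
    (hYsqid i).integrable_iff.mpr hX2
  have hEYsqi : ∀ i, ∫ ω, Y i ω ^ 2 ∂μ = EY2 := fun i => (hYsqid i).integral_eq
  have hEY2_nonneg : 0 ≤ EY2 := integral_nonneg fun ω => sq_nonneg _
  have hEY_nonneg : 0 ≤ EY := integral_nonneg fun ω => norm_nonneg _
  have hEV0_nonneg : 0 ≤ EV0 := integral_nonneg fun ω => sq_nonneg _
  have hEYsq_le : EY ^ 2 ≤ EY2 := by
    have hvar := variance_nonneg (Y 0) μ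
    rw [variance_eq_sub hY0mem] at hvar
    have h1 : (∫ ω, (Y 0 ^ 2) ω ∂μ) = EY2 := by
      simpa only [Pi.pow_apply] using hEYsqi 0
    have h2 : (∫ ω, Y 0 ω ∂μ) = EY := hEYi 0
    simp only [h1] at hvar
    rw [h2] at hvar
    linarith
  -- measurability of Nf T
  have hNfmeas : Measurable (Nf T) := by
    apply measurable_to_countable'
    intro k
    have hchar : (Nf T) ⁻¹' {k} =
        ((⋂ i, {ω | i < k → τ i ω ≤ T}) ∩ {ω | T < τ k ω}) ∪
          ((⋂ i, {ω | τ i ω ≤ T}) ∩ {ω : Ω | k = 0}) := by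
      ext ω
      simp only [Set.mem_preimage, Set.mem_singleton_iff, hNf T ω, Set.mem_union,
        Set.mem_inter_iff, Set.mem_iInter, Set.mem_setOf_eq]
      rw [aux_card_char (fun i => τ i ω) (hτmono ω) T k]
      tauto
    rw [hchar]
    apply MeasurableSet.union
    · exact (MeasurableSet.iInter fun i => by
        by_cases hik : i < k
        · simp only [hik, true_implies]
          exact measurableSet_le (hτmeas i) measurable_const
        · simp only [hik, false_implies, Set.setOf_true]
          exact MeasurableSet.univ).inter
        (measurableSet_lt measurable_const (hτmeas k))
    · exact (MeasurableSet.iInter fun i => measurableSet_le (hτmeas i) measurable_const).inter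
        (by by_cases hk : k = 0 <;> simp [hk])
  set A : ℕ → Set Ω := fun k => (Nf T) ⁻¹' {k} with hA_def
  have hAmeas : ∀ k, MeasurableSet (A k) := fun k => hNfmeas (measurableSet_singleton k)
  have hμA : ∀ k, μ (A k) = ENNReal.ofReal (Real.exp (-m) * m ^ k / k.factorial) := by
    intro k
    have : A k = {ω | Nf T ω = k} := rfl
    rw [this, hpois k]
  set g : ℕ → Ω → ℝ := fun k ω => (∑ i ∈ Finset.range k, Y i ω) ^ 2 with hg_def
  have hgmeas : ∀ k, Measurable (g k) := fun k =>
    (Finset.measurable_sum _ fun i _ => hYmeas i).pow_const 2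
  have hgnonneg : ∀ k ω, 0 ≤ g k ω := fun k ω => sq_nonneg _
  have hgint : ∀ k, Integrable (g k) μ := by
    intro k
    have hsum_mem : MemLp (fun ω => ∑ i ∈ Finset.range k, Y i ω) 2 μ :=
      memLp_finset_sum (Finset.range k) fun i _ => hYmem i
    exact (memLp_two_iff_integrable_sq
      (Finset.measurable_sum _ fun i _ => hYmeas i).aestronglyMeasurable).mp hsum_mem
  have hEg : ∀ k : ℕ, ∫ ω, g k ω ∂μ = k * EY2 + ((k : ℝ) ^ 2 - k) * EY ^ 2 := by
    intro k
    have hprod_int : ∀ i j : ℕ, Integrable (fun ω => Y i ω * Y j ω) μ := by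
      intro i j
      rcases eq_or_ne i j with rfl | hij
      · simpa [pow_two] using hYsqint i
      · exact ((hindep.indepFun hij).comp measurable_norm measurable_norm).integrable_mul
          (hYint i) (hYint j)
    have hterm : ∀ i j : ℕ, (∫ ω, Y i ω * Y j ω ∂μ)
        = if i = j then EY2 else EY ^ 2 := by
      intro i j
      rcases eq_or_ne i j with rfl | hij
      · simpa [pow_two] using hEYsqi i
      · rw [if_neg hij]
        have := ((hindep.indepFun hij).comp measurable_norm measurable_norm :
          IndepFun (Y i) (Y j) μ).integral_mul_eq_mul_integral (hYint i).aestronglyMeasurable (hYint j).aestronglyMeasurable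
        have h2 : (∫ ω, Y i ω * Y j ω ∂μ) = (∫ ω, Y i ω ∂μ) * ∫ ω, Y j ω ∂μ := this
        rw [h2, hEYi i, hEYi j, sq]
    have hexpand : ∀ ω, g k ω = ∑ i ∈ Finset.range k, ∑ j ∈ Finset.range k, Y i ω * Y j ω := by
      intro ω
      rw [hg_def]
      simp only [pow_two]
      rw [Finset.sum_mul_sum]
    calc ∫ ω, g k ω ∂μ
        = ∫ ω, ∑ i ∈ Finset.range k, ∑ j ∈ Finset.range k, Y i ω * Y j ω ∂μ := by
          exact integral_congr_ae (Filter.Eventually.of_forall hexpand)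
      _ = ∑ i ∈ Finset.range k, ∑ j ∈ Finset.range k, ∫ ω, Y i ω * Y j ω ∂μ := by
          rw [integral_finset_sum _ fun i _ => integrable_finset_sum _ fun j _ => hprod_int i j]
          exact Finset.sum_congr rfl fun i _ =>
            integral_finset_sum _ fun j _ => hprod_int i j
      _ = ∑ i ∈ Finset.range k, ∑ j ∈ Finset.range k, if i = j then EY2 else EY ^ 2 := by
          exact Finset.sum_congr rfl fun i _ => Finset.sum_congr rfl fun j _ => hterm i j
      _ = ∑ i ∈ Finset.range k, ∑ j ∈ Finset.range k,
            (EY ^ 2 + if i = j then EY2 - EY ^ 2 else 0) := by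
          refine Finset.sum_congr rfl fun i _ => Finset.sum_congr rfl fun j _ => ?_
          by_cases h : i = j <;> simp [h]
      _ = k * EY2 + ((k : ℝ) ^ 2 - k) * EY ^ 2 := by
          simp only [Finset.sum_add_distrib, Finset.sum_const, Finset.card_range,
            Finset.sum_ite_eq, Finset.mem_range]
          rw [Finset.sum_congr rfl (fun i (hi : i ∈ Finset.range k) => if_pos
            (Finset.mem_range.mp hi))]
          simp only [Finset.sum_const, Finset.card_range, nsmul_eq_mul]
          ring
  set S : Ω → ℝ := fun ω => ∑ i ∈ Finset.range (Nf T ω), Y i ω with hS_def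
  have hSmeas : Measurable S := by
    have houter : Measurable (fun p : Ω × ℕ => ∑ i ∈ Finset.range p.2, Y i p.1) :=
      measurable_from_prod_countable_left fun k =>
        (show Measurable fun ω : Ω => ∑ i ∈ Finset.range k, Y i ω from
          Finset.measurable_sum _ fun i _ => hYmeas i)
    exact houter.comp (measurable_id.prodMk hNfmeas)
  set f : ℕ → Ω → ℝ := fun k => (A k).indicator (fun _ => (1:ℝ)) with hf_def
  have hfmeas : ∀ k, Measurable (f k) := fun k => (measurable_const.indicator (hAmeas k))
  have hindepk : ∀ k, IndepFun (f k) (g k) μ := by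
    intro k
    have hNmeas' : Measurable[MeasurableSpace.comap (Nf T) inferInstance] (Nf T) :=
      Measurable.of_comap_le le_rfl
    have hfk : Measurable[MeasurableSpace.comap (Nf T) inferInstance] (f k) := by
      have heq : f k = (fun j : ℕ => if j = k then (1:ℝ) else 0) ∘ (Nf T) := by
        ext ω
        simp [hf_def, Set.indicator_apply, hA_def, Function.comp]
      rw [heq]
      exact Measurable.of_discrete.comp hNmeas'
    have hXi' : ∀ i, Measurable[⨆ i, MeasurableSpace.comap (X i) inferInstance] (X i) :=
      fun i => Measurable.of_comap_le
        (le_iSup (fun i => MeasurableSpace.comap (X i) inferInstance) i)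
    have hgk : Measurable[⨆ i, MeasurableSpace.comap (X i) inferInstance] (g k) := by
      have hsum : Measurable[⨆ i, MeasurableSpace.comap (X i) inferInstance]
          (fun ω => ∑ i ∈ Finset.range k, Y i ω) :=
        Finset.measurable_sum _ fun i _ => measurable_norm.comp (hXi' i)
      exact hsum.pow_const 2
    exact (IndepFun_iff_Indep _ _ μ).mpr
      (indep_of_indep_of_le_right (indep_of_indep_of_le_left hNindep hfk.comap_le)
        hgk.comap_le)
  have hfgint : ∀ k, Integrable (fun ω => f k ω * g k ω) μ := by
    intro k
    have := (hindepk k).integrable_mul ((integrable_const (1:ℝ)).indicator (hAmeas k)) (hgint k)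
    exact this
  have hint_prod : ∀ k : ℕ, ∫ ω, f k ω * g k ω ∂μ
      = (Real.exp (-m) * m ^ k / k.factorial) * ∫ ω, g k ω ∂μ := by
    intro k
    have h1 := (hindepk k).integral_mul_eq_mul_integral
      ((integrable_const (1:ℝ)).indicator (hAmeas k)).aestronglyMeasurable (hgint k).aestronglyMeasurable
    have h2 : (∫ ω, f k ω ∂μ) = Real.exp (-m) * m ^ k / k.factorial := by
      rw [hf_def]
      rw [integral_indicator_const (1:ℝ) (hAmeas k), measureReal_def, hμA k, smul_eq_mul, mul_one,
        ENNReal.toReal_ofReal (by positivity)]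
    calc ∫ ω, f k ω * g k ω ∂μ = (∫ ω, f k ω ∂μ) * ∫ ω, g k ω ∂μ := h1
      _ = (Real.exp (-m) * m ^ k / k.factorial) * ∫ ω, g k ω ∂μ := by rw [h2]
  set B : ℝ := m * EY2 + (m + m ^ 2) * EY ^ 2 with hB_def
  have hBnonneg : 0 ≤ B := by
    have := sq_nonneg EY
    nlinarith
  have hfg_nonneg : ∀ k ω, 0 ≤ f k ω * g k ω := by
    intro k ω
    apply mul_nonneg _ (hgnonneg k ω)
    rw [hf_def]
    exact Set.indicator_nonneg (fun _ _ => zero_le_one) ω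
  -- pointwise tsum decomposition of S²
  have hStsum : ∀ ω, ENNReal.ofReal (S ω ^ 2)
      = ∑' k, ENNReal.ofReal (f k ω * g k ω) := by
    intro ω
    have hzero : ∀ k, k ≠ Nf T ω → ENNReal.ofReal (f k ω * g k ω) = 0 := by
      intro k hk
      have hnot : ω ∉ A k := by
        simp only [hA_def, Set.mem_preimage, Set.mem_singleton_iff]
        exact fun h => hk h.symm
      rw [hf_def]
      simp [Set.indicator_of_notMem hnot]
    rw [tsum_eq_single (Nf T ω) hzero]
    have hmem : ω ∈ A (Nf T ω) := rfl
    rw [hf_def]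
    simp only [Set.indicator_of_mem hmem, one_mul]
    rfl
  -- Poisson series bound
  have hu : HasSum (fun k : ℕ => (Real.exp (-m) * m ^ k / k.factorial)
      * ((k : ℝ) * EY2 + (k : ℝ) ^ 2 * EY ^ 2))
      (Real.exp (-m) * (EY2 * (m * Real.exp m)
        + EY ^ 2 * (m * (m * Real.exp m) + m * Real.exp m))) := by
    have h := (((aux_pois1 m).mul_left EY2).add ((aux_pois2 m).mul_left (EY ^ 2))).mul_left
      (Real.exp (-m))
    convert h using 2 with k
    · rfl
    ring
  have huval : Real.exp (-m) * (EY2 * (m * Real.exp m)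
      + EY ^ 2 * (m * (m * Real.exp m) + m * Real.exp m)) = B := by
    have h1 : Real.exp (-m) * Real.exp m = 1 := by
      rw [← Real.exp_add]; simp
    rw [hB_def]
    linear_combination (EY2 * m + EY ^ 2 * (m ^ 2 + m)) * h1
  have hlint : ∫⁻ ω, ENNReal.ofReal (S ω ^ 2) ∂μ ≤ ENNReal.ofReal B := by
    calc ∫⁻ ω, ENNReal.ofReal (S ω ^ 2) ∂μ
        = ∫⁻ ω, ∑' k, ENNReal.ofReal (f k ω * g k ω) ∂μ :=
          lintegral_congr fun ω => hStsum ω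
      _ = ∑' k, ∫⁻ ω, ENNReal.ofReal (f k ω * g k ω) ∂μ :=
          lintegral_tsum fun k => ((hfmeas k).mul (hgmeas k)).ennreal_ofReal.aemeasurable
      _ = ∑' k, ENNReal.ofReal (∫ ω, f k ω * g k ω ∂μ) := by
          refine tsum_congr fun k => ?_
          rw [← ofReal_integral_eq_lintegral_ofReal (hfgint k)
            (Filter.Eventually.of_forall fun ω => hfg_nonneg k ω)]
      _ ≤ ∑' k : ℕ, ENNReal.ofReal ((Real.exp (-m) * m ^ k / k.factorial)
            * ((k : ℝ) * EY2 + (k : ℝ) ^ 2 * EY ^ 2)) := by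
          refine ENNReal.tsum_le_tsum fun k => ENNReal.ofReal_le_ofReal ?_
          rw [hint_prod k, hEg k]
          have hp : (0:ℝ) ≤ Real.exp (-m) * m ^ k / k.factorial := by positivity
          apply mul_le_mul_of_nonneg_left _ hp
          have : ((k:ℝ) ^ 2 - k) * EY ^ 2 ≤ (k:ℝ) ^ 2 * EY ^ 2 := by
            apply mul_le_mul_of_nonneg_right _ (sq_nonneg EY)
            have : (0:ℝ) ≤ (k:ℝ) := Nat.cast_nonneg k
            linarith
          linarith
      _ = ENNReal.ofReal B := by
          rw [← huval, ← hu.tsum_eq, ENNReal.ofReal_tsum_of_nonneg _ hu.summable]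
          intro k
          have h1 : (0:ℝ) ≤ Real.exp (-m) * m ^ k / k.factorial := by positivity
          have h2 : (0:ℝ) ≤ (k : ℝ) * EY2 + (k : ℝ) ^ 2 * EY ^ 2 := by positivity
          exact mul_nonneg h1 h2
  have hS2int : Integrable (fun ω => S ω ^ 2) μ := by
    refine ⟨(hSmeas.pow_const 2).aestronglyMeasurable, ?_⟩
    have heqn : ∫⁻ ω, ‖S ω ^ 2‖ₑ ∂μ = ∫⁻ ω, ENNReal.ofReal (S ω ^ 2) ∂μ :=
      lintegral_congr fun ω => Real.enorm_eq_ofReal (sq_nonneg _)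
    rw [HasFiniteIntegral, heqn]
    exact lt_of_le_of_lt hlint ENNReal.ofReal_lt_top
  have hS2le : ∫ ω, S ω ^ 2 ∂μ ≤ B := by
    rw [integral_eq_lintegral_of_nonneg_ae (Filter.Eventually.of_forall fun ω => sq_nonneg _)
      (hSmeas.pow_const 2).aestronglyMeasurable]
    calc (∫⁻ ω, ENNReal.ofReal (S ω ^ 2) ∂μ).toReal
        ≤ (ENNReal.ofReal B).toReal := ENNReal.toReal_mono ENNReal.ofReal_ne_top hlint
      _ = B := ENNReal.toReal_ofReal hBnonneg
  -- spectral facts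
  have hbone : ∀ j, ‖b j‖ = 1 := fun j => b.orthonormal.1 j
  have hΛbd : ∀ j, |Λ j| ≤ ‖c‖ := by
    intro j
    have h1 : ‖c (b j)‖ ≤ ‖c‖ * ‖b j‖ := c.le_opNorm (b j)
    rw [heig j, norm_smul, Real.norm_eq_abs, hbone j, mul_one, mul_one] at h1
    exact h1
  have hne : ∀ n, Nonempty {m : ℕ // m ∉ J n} := by
    intro n
    obtain ⟨m0, hm0⟩ := ((J n).finite_toSet.infinite_compl).nonempty
    exact ⟨⟨m0, hm0⟩⟩
  set K2 : ℕ → ℝ := fun n => ⨆ m : {m : ℕ // m ∉ J n}, Λ m.1 ^ 2 with hK2_def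
  have hbdd : ∀ n, BddAbove (Set.range fun m : {m : ℕ // m ∉ J n} => Λ m.1 ^ 2) := by
    intro n
    refine ⟨‖c‖ ^ 2, ?_⟩
    rintro y ⟨mm, rfl⟩
    calc Λ mm.1 ^ 2 = |Λ mm.1| ^ 2 := (sq_abs _).symm
      _ ≤ ‖c‖ ^ 2 := pow_le_pow_left₀ (abs_nonneg _) (hΛbd mm.1) 2
  have hK2nonneg : ∀ n, 0 ≤ K2 n := fun n => Real.iSup_nonneg fun mm => sq_nonneg _
  have hK2le : ∀ n, ∀ j ∉ J n, Λ j ^ 2 ≤ K2 n := fun n j hj => le_ciSup (hbdd n) ⟨j, hj⟩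
  have hPb : ∀ n j', P n (b j') = if j' ∈ J n then b j' else 0 := by
    intro n j'
    rw [hP]
    have hterm : ∀ x ∈ J n, (⟪b j', b x⟫_ℝ • b x) = if j' = x then b x else 0 := by
      intro x hx
      rw [orthonormal_iff_ite.mp b.orthonormal]
      by_cases h : j' = x <;> simp [h]
    rw [Finset.sum_congr rfl hterm, Finset.sum_ite_eq]
  have hcnb : ∀ n j, cn n (b j) = (if j ∈ J n then Λ j else 0) • b j := by
    intro n j
    rw [hcn]
    simp only [ContinuousLinearMap.comp_apply]
    by_cases hj : j ∈ J n
    · rw [hPb n j, if_pos hj, heig j, (P n).map_smul, hPb n j, if_pos hj, if_pos hj]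
    · rw [hPb n j, if_neg hj, map_zero, map_zero, if_neg hj, zero_smul]
  constructor
  · -- main inequality
    intro n
    haveI := hne n
    haveI : Nonempty (Set.Icc (0:ℝ) T) := ⟨⟨0, Set.mem_Icc.mpr ⟨le_refl 0, hT.le⟩⟩⟩
    set M : ℝ := T * Real.exp (T * ‖c‖) * Real.sqrt (K2 n) with hM_def
    have hMnn : 0 ≤ M := by
      rw [hM_def]
      have := Real.sqrt_nonneg (K2 n)
      positivity
    have hopb : ∀ s : ℝ, 0 ≤ s → s ≤ T → ∀ y : E,
        ‖NormedSpace.exp (s • c) y - NormedSpace.exp (s • cn n) y‖ ≤ M * ‖y‖ := by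
      intro s hs0 hsT y
      set D : E →L[ℝ] E := NormedSpace.exp (s • c) - NormedSpace.exp (s • cn n) with hD_def
      set d : ℕ → ℝ := fun j =>
        Real.exp (s * Λ j) - Real.exp (s * (if j ∈ J n then Λ j else 0)) with hd_def
      have hDb : ∀ j, D (b j) = d j • b j := by
        intro j
        rw [hD_def, ContinuousLinearMap.sub_apply,
          aux_exp_diag c (b j) (Λ j) (heig j) s,
          aux_exp_diag (cn n) (b j) _ (hcnb n j) s, ← sub_smul]
      have hdle : ∀ j, |d j| ≤ M := by
        intro j
        by_cases hj : j ∈ J n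
        · rw [hd_def]
          simp only [if_pos hj, sub_self, abs_zero]
          exact hMnn
        · rw [hd_def]
          simp only [if_neg hj, mul_zero, Real.exp_zero]
          have h1 := aux_exp_abs (s * Λ j)
          have h2 : |s * Λ j| = s * |Λ j| := by rw [abs_mul, abs_of_nonneg hs0]
          have hs0T : (0:ℝ) ≤ T := hT.le
          have h3 : |Λ j| ≤ Real.sqrt (K2 n) := by
            rw [← Real.sqrt_sq_eq_abs]
            exact Real.sqrt_le_sqrt (hK2le n j hj)
          have h4 : s * |Λ j| ≤ T * Real.sqrt (K2 n) :=
            mul_le_mul hsT h3 (abs_nonneg _) hs0T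
          have h5 : Real.exp |s * Λ j| ≤ Real.exp (T * ‖c‖) := by
            apply Real.exp_le_exp.mpr
            rw [h2]
            exact mul_le_mul hsT (hΛbd j) (abs_nonneg _) hs0T
          calc |Real.exp (s * Λ j) - 1| ≤ |s * Λ j| * Real.exp |s * Λ j| := h1
            _ ≤ (T * Real.sqrt (K2 n)) * Real.exp (T * ‖c‖) := by
                apply mul_le_mul _ h5 (Real.exp_pos _).le (by positivity)
                rw [h2]; exact h4
            _ = M := by rw [hM_def]; ring
      have hdn := aux_diag_norm b D d hDb M hMnn hdle y
      rw [hD_def, ContinuousLinearMap.sub_apply] at hdn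
      exact hdn
    have hVdiff : ∀ ω, {i : ℕ | τ i ω ≤ T}.Finite → ∀ t : Set.Icc (0:ℝ) T,
        ‖V t.1 ω - Vn n t.1 ω‖ ≤ M * (‖V₀ ω‖ + S ω) := by
      intro ω hfinT t
      obtain ⟨ht0, htT⟩ := t.2
      have hlow : ∀ i j : ℕ, i ≤ j → j ∈ {i : ℕ | τ i ω ≤ t.1} → i ∈ {i : ℕ | τ i ω ≤ t.1} :=
        fun i j hij hj => le_trans ((hτmono ω).monotone hij) hj
      have hlowT : ∀ i j : ℕ, i ≤ j → j ∈ {i : ℕ | τ i ω ≤ T} → i ∈ {i : ℕ | τ i ω ≤ T} :=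
        fun i j hij hj => le_trans ((hτmono ω).monotone hij) hj
      have hsub : {i : ℕ | τ i ω ≤ t.1} ⊆ {i : ℕ | τ i ω ≤ T} :=
        fun i hi => le_trans hi htT
      have hfin_t := hfinT.subset hsub
      have hIio_t : {i : ℕ | τ i ω ≤ t.1} = Set.Iio (Nf t.1 ω) := by
        rw [hNf t.1 ω]; exact aux_lower_eq_Iio hlow hfin_t
      have hIio_T : {i : ℕ | τ i ω ≤ T} = Set.Iio (Nf T ω) := by
        rw [hNf T ω]; exact aux_lower_eq_Iio hlowT hfinT
      have hmem : ∀ i, i < Nf t.1 ω → τ i ω ≤ t.1 := by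
        intro i hi
        have h : i ∈ {i : ℕ | τ i ω ≤ t.1} := by rw [hIio_t]; exact hi
        exact h
      have hle : Nf t.1 ω ≤ Nf T ω := by
        by_contra h
        push_neg at h
        have h1 : Nf T ω ∈ {i : ℕ | τ i ω ≤ t.1} := by rw [hIio_t]; exact h
        have h2 := hsub h1
        rw [hIio_T] at h2
        exact lt_irrefl _ (Set.mem_Iio.mp h2)
      rw [hV, hVn]
      have hsplit : ((NormedSpace.exp (t.1 • c)) (V₀ ω)
            + ∑ i ∈ Finset.range (Nf t.1 ω), (NormedSpace.exp ((t.1 - τ i ω) • c)) (X i ω))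
          - ((NormedSpace.exp (t.1 • cn n)) (V₀ ω)
            + ∑ i ∈ Finset.range (Nf t.1 ω), (NormedSpace.exp ((t.1 - τ i ω) • cn n)) (X i ω))
          = ((NormedSpace.exp (t.1 • c)) (V₀ ω) - (NormedSpace.exp (t.1 • cn n)) (V₀ ω))
            + ∑ i ∈ Finset.range (Nf t.1 ω),
              ((NormedSpace.exp ((t.1 - τ i ω) • c)) (X i ω)
                - (NormedSpace.exp ((t.1 - τ i ω) • cn n)) (X i ω)) := by
        rw [Finset.sum_sub_distrib]
        abel
      rw [hsplit]
      refine le_trans (norm_add_le _ _) ?_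
      have hterm1 : ‖(NormedSpace.exp (t.1 • c)) (V₀ ω)
          - (NormedSpace.exp (t.1 • cn n)) (V₀ ω)‖ ≤ M * ‖V₀ ω‖ := hopb t.1 ht0 htT (V₀ ω)
      have hterm2 : ‖∑ i ∈ Finset.range (Nf t.1 ω),
            ((NormedSpace.exp ((t.1 - τ i ω) • c)) (X i ω)
              - (NormedSpace.exp ((t.1 - τ i ω) • cn n)) (X i ω))‖
          ≤ ∑ i ∈ Finset.range (Nf t.1 ω), M * ‖X i ω‖ := by
        refine le_trans (norm_sum_le _ _) (Finset.sum_le_sum fun i hi => ?_)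
        have hτi := hmem i (Finset.mem_range.mp hi)
        have hτp := hτpos i ω
        exact hopb (t.1 - τ i ω) (by linarith) (by linarith) (X i ω)
      have hsum2 : ∑ i ∈ Finset.range (Nf t.1 ω), M * ‖X i ω‖
          ≤ ∑ i ∈ Finset.range (Nf T ω), M * ‖X i ω‖ :=
        Finset.sum_le_sum_of_subset_of_nonneg (Finset.range_subset_range.mpr hle)
          (fun i _ _ => mul_nonneg hMnn (norm_nonneg _))
      have heqS : M * (‖V₀ ω‖ + S ω)
          = M * ‖V₀ ω‖ + ∑ i ∈ Finset.range (Nf T ω), M * ‖X i ω‖ := by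
        have hSx : S ω = ∑ i ∈ Finset.range (Nf T ω), ‖X i ω‖ := rfl
        rw [hSx, mul_add, Finset.mul_sum]
      linarith
    set Cc : ℝ := 2 * T ^ 2 * Real.exp (2 * T * ‖c‖) * K2 n with hCc_def
    have hCcnn : 0 ≤ Cc := by
      rw [hCc_def]
      have h1 : (0:ℝ) ≤ 2 * T ^ 2 * Real.exp (2 * T * ‖c‖) := by positivity
      exact mul_nonneg h1 (hK2nonneg n)
    have hexp2 : Real.exp (T * ‖c‖) ^ 2 = Real.exp (2 * T * ‖c‖) := by
      rw [← Real.exp_nat_mul]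
      norm_num
      ring_nf
    have hM2 : M ^ 2 = T ^ 2 * Real.exp (2 * T * ‖c‖) * K2 n := by
      rw [hM_def, mul_pow, mul_pow, Real.sq_sqrt (hK2nonneg n), hexp2]
    have hsup : ∀ᵐ ω ∂μ, (⨆ t : Set.Icc (0:ℝ) T, ‖V t.1 ω - Vn n t.1 ω‖ ^ 2)
        ≤ Cc * (‖V₀ ω‖ ^ 2 + S ω ^ 2) := by
      filter_upwards [hfin T] with ω hfinT
      refine ciSup_le fun t => ?_
      have h := hVdiff ω hfinT t
      have h2 : ‖V t.1 ω - Vn n t.1 ω‖ ^ 2 ≤ (M * (‖V₀ ω‖ + S ω)) ^ 2 :=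
        pow_le_pow_left₀ (norm_nonneg _) h 2
      have h3 : (M * (‖V₀ ω‖ + S ω)) ^ 2 ≤ M ^ 2 * (2 * (‖V₀ ω‖ ^ 2 + S ω ^ 2)) := by
        have hsq : (‖V₀ ω‖ + S ω) ^ 2 ≤ 2 * (‖V₀ ω‖ ^ 2 + S ω ^ 2) := by
          nlinarith [sq_nonneg (‖V₀ ω‖ - S ω)]
        calc (M * (‖V₀ ω‖ + S ω)) ^ 2 = M ^ 2 * (‖V₀ ω‖ + S ω) ^ 2 := by ring
          _ ≤ M ^ 2 * (2 * (‖V₀ ω‖ ^ 2 + S ω ^ 2)) :=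
            mul_le_mul_of_nonneg_left hsq (sq_nonneg M)
      have h4 : M ^ 2 * (2 * (‖V₀ ω‖ ^ 2 + S ω ^ 2)) = Cc * (‖V₀ ω‖ ^ 2 + S ω ^ 2) := by
        rw [hM2, hCc_def]
        ring
      linarith
    have hhint : Integrable (fun ω => Cc * (‖V₀ ω‖ ^ 2 + S ω ^ 2)) μ :=
      (hV₀.add hS2int).const_mul Cc
    have hmain := integral_mono_of_nonneg
      (Filter.Eventually.of_forall fun ω => Real.iSup_nonneg fun t => sq_nonneg _) hhint hsup
    have hhval : ∫ ω, Cc * (‖V₀ ω‖ ^ 2 + S ω ^ 2) ∂μ = Cc * (EV0 + ∫ ω, S ω ^ 2 ∂μ) := by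
      rw [integral_const_mul, integral_add hV₀ hS2int]
    calc (∫ ω, (⨆ t : Set.Icc (0:ℝ) T, ‖V t.1 ω - Vn n t.1 ω‖ ^ 2) ∂μ)
        ≤ Cc * (EV0 + ∫ ω, S ω ^ 2 ∂μ) := by rw [← hhval]; exact hmain
      _ ≤ Cc * (EV0 + B) := mul_le_mul_of_nonneg_left (add_le_add_right hS2le EV0) hCcnn
      _ ≤ 4 * T ^ 2 * Real.exp (2 * T * ‖c‖)
            * (EV0 + m * EY2 + lam ^ 2 * T ^ 2 * EY ^ 2) * K2 n := by
          have hbase : EV0 + B ≤ 2 * (EV0 + m * EY2 + lam ^ 2 * T ^ 2 * EY ^ 2) := by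
            rw [hB_def]
            have hmEY : m * EY ^ 2 ≤ m * EY2 := mul_le_mul_of_nonneg_left hEYsq_le hm.le
            have hm2 : m ^ 2 = lam ^ 2 * T ^ 2 := by rw [hm_def]; ring
            nlinarith [sq_nonneg EY, hEV0_nonneg]
          calc Cc * (EV0 + B)
              = (EV0 + B) * (2 * (T ^ 2 * Real.exp (2 * T * ‖c‖))) * K2 n := by
                rw [hCc_def]; ring
            _ ≤ (2 * (EV0 + m * EY2 + lam ^ 2 * T ^ 2 * EY ^ 2))
                  * (2 * (T ^ 2 * Real.exp (2 * T * ‖c‖))) * K2 n := by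
                apply mul_le_mul_of_nonneg_right _ (hK2nonneg n)
                apply mul_le_mul_of_nonneg_right hbase (by positivity)
            _ = 4 * T ^ 2 * Real.exp (2 * T * ‖c‖)
                  * (EV0 + m * EY2 + lam ^ 2 * T ^ 2 * EY ^ 2) * K2 n := by ring
  · -- convergence
    have hK2tend : Filter.Tendsto K2 Filter.atTop (nhds 0) := by
      rw [Metric.tendsto_atTop]
      intro ε hε
      have hsq : Filter.Tendsto (fun j => Λ j ^ 2) Filter.atTop (nhds 0) := by
        have h0 := hΛ.mul hΛ
        rw [mul_zero] at h0
        have heq : (fun j => Λ j ^ 2) = fun j => Λ j * Λ j := by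
          funext j; ring
        rw [heq]
        exact h0
      rw [Metric.tendsto_atTop] at hsq
      obtain ⟨M0, hM0⟩ := hsq (ε / 2) (by linarith)
      have hmono : Monotone J := monotone_nat_of_le_succ hnest
      set N0 : ℕ := (Finset.range M0).sup fun j => (hcover j).choose with hN0
      refine ⟨N0, fun n hn => ?_⟩
      haveI := hne n
      rw [Real.dist_eq, sub_zero, abs_of_nonneg (hK2nonneg n)]
      have hK2small : K2 n ≤ ε / 2 := by
        refine ciSup_le fun mm => ?_
        have hge : M0 ≤ mm.1 := by
          by_contra h
          push_neg at h
          have h1 : mm.1 ∈ J ((hcover mm.1).choose) := (hcover mm.1).choose_spec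
          have h2 : (fun j => (hcover j).choose) mm.1 ≤ N0 := by
            rw [hN0]
            exact Finset.le_sup (f := fun j => (hcover j).choose) (Finset.mem_range.mpr h)
          exact mm.2 (hmono (le_trans h2 hn) h1)
        have hd := hM0 mm.1 hge
        rw [Real.dist_eq, sub_zero] at hd
        have := lt_of_abs_lt hd
        linarith
      linarith
    have hfin := hK2tend.const_mul
      (4 * T ^ 2 * Real.exp (2 * T * ‖c‖) * (EV0 + m * EY2 + lam ^ 2 * T ^ 2 * EY ^ 2))
    rw [mul_zero] at hfin
    exact hfin
end
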